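/- arXiv:1603.04786 — 3 statements merged into one kernel-verified Lean document; each statement's English description precedes it below -/
import Mathlib

section
/- Let k > 0, T > 0, and let q : ℝ × (0,T) → ℝ be bounded and measurable with A ≤ q(x,t) ≤ B for all (x,t). Let g : ℝ → ℝ be bounded, continuous and nonnegative, and let u : ℝ × [0,T] → ℝ be bounded and continuous, twice continuously differentiable in x and once in t on ℝ × (0,T), with u_t = k u_{xx} + q u on ℝ × (0,T) and u(·,0) = g. Let R(x,t) = ∫_ℝ K(x−ξ, t) g(ξ) dξ be the solution of the heat equation R_t = k R_{xx} with R(·,0) = g. Then for all x ∈ ℝ and t ∈ (0,T): e^{A t} R(x,t) ≤ u(x,t) ≤ e^{B t} R(x,t); in particular u ≥ 0. -/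
open MeasureTheory Set

/-- The heat kernel with diffusivity `k`. -/
noncomputable def heatKernel (k x t : ℝ) : ℝ :=
  (Real.sqrt (4 * Real.pi * k * t))⁻¹ * Real.exp (-(x ^ 2) / (4 * k * t))

namespace HeatCmp

open Real Filter Metric Topology

lemma integrable_gauss_lin {b : ℝ} (hb : 0 < b) (c : ℝ) :
    Integrable (fun y : ℝ => Real.exp (-b * y ^ 2 + c * |y|)) := by
  have hcont : Continuous fun y : ℝ => Real.exp (-b * y ^ 2 + c * |y|) :=
    Real.continuous_exp.comp
      (((continuous_const.mul (continuous_pow 2)).add (continuous_const.mul continuous_abs)))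
  refine ((integrable_exp_neg_mul_sq (show 0 < b / 2 by linarith)).const_mul
      (Real.exp (c ^ 2 / (2 * b)))).mono' hcont.aestronglyMeasurable ?_
  filter_upwards with y
  rw [Real.norm_eq_abs, abs_of_pos (Real.exp_pos _), ← Real.exp_add]
  apply Real.exp_le_exp.mpr
  have key : c * |y| - (b / 2) * y ^ 2 ≤ c ^ 2 / (2 * b) := by
    rw [le_div_iff₀ (by linarith : (0:ℝ) < 2 * b)]
    have h2 : b ^ 2 * |y| ^ 2 = b ^ 2 * y ^ 2 := by rw [sq_abs]
    nlinarith [sq_nonneg (b * |y| - c), h2]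
  linarith

lemma integrable_gauss_shift {b : ℝ} (hb : 0 < b) (c C x0 : ℝ) :
    Integrable (fun ξ : ℝ => C * Real.exp (-b * (x0 - ξ) ^ 2 + c * |x0 - ξ|)) :=
  ((integrable_gauss_lin hb c).comp_sub_left x0).const_mul C

lemma sq_le_exp_two_abs (a : ℝ) : a ^ 2 ≤ Real.exp (2 * |a|) := by
  have h1 : |a| ≤ Real.exp |a| := by linarith [Real.add_one_le_exp |a|, abs_nonneg a]
  calc a ^ 2 = |a| * |a| := by rw [← sq_abs]; ring
    _ ≤ Real.exp |a| * Real.exp |a| :=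
        mul_le_mul h1 h1 (abs_nonneg a) (Real.exp_nonneg _)
    _ = Real.exp (2 * |a|) := by rw [← Real.exp_add]; ring_nf

lemma abs_le_exp_two_abs (a : ℝ) : |a| ≤ Real.exp (2 * |a|) := by
  have h1 : |a| ≤ Real.exp |a| := by linarith [Real.add_one_le_exp |a|, abs_nonneg a]
  exact h1.trans (Real.exp_le_exp.mpr (by linarith [abs_nonneg a]))

lemma one_le_exp_two_abs (a : ℝ) : 1 ≤ Real.exp (2 * |a|) :=
  Real.one_le_exp (by positivity)

lemma heatKernel_nonneg (k y t : ℝ) : 0 ≤ heatKernel k y t :=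
  mul_nonneg (inv_nonneg.2 (Real.sqrt_nonneg _)) (Real.exp_pos _).le

lemma heatKernel_eq (k y t : ℝ) :
    heatKernel k y t = (Real.sqrt (4 * π * k * t))⁻¹ * Real.exp (-(1 / (4 * k * t)) * y ^ 2) := by
  unfold heatKernel
  congr 1
  congr 1
  ring

lemma integrable_heatKernel {k t : ℝ} (hk : 0 < k) (ht : 0 < t) :
    Integrable (fun y => heatKernel k y t) := by
  simp_rw [heatKernel_eq]
  exact (integrable_exp_neg_mul_sq (show (0:ℝ) < 1 / (4 * k * t) by positivity)).const_mul _

lemma integral_heatKernel {k t : ℝ} (hk : 0 < k) (ht : 0 < t) :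
    ∫ y : ℝ, heatKernel k y t = 1 := by
  simp_rw [heatKernel_eq, integral_const_mul, integral_gaussian]
  rw [show π / (1 / (4 * k * t)) = 4 * π * k * t by rw [one_div, div_eq_mul_inv, inv_inv]; ring]
  exact inv_mul_cancel₀ (Real.sqrt_pos.mpr (by positivity)).ne'

lemma hasDerivAt_heatKernel_x {k t : ℝ} (hk : 0 < k) (ht : 0 < t) (y : ℝ) :
    HasDerivAt (fun y => heatKernel k y t) (-(y / (2 * k * t)) * heatKernel k y t) y := by
  have h1 : HasDerivAt (fun y : ℝ => -(y ^ 2) / (4 * k * t)) (-(2 * y) / (4 * k * t)) y := by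
    simpa using ((hasDerivAt_pow 2 y).neg.div_const (4 * k * t))
  have h3 := (h1.exp).const_mul ((Real.sqrt (4 * π * k * t))⁻¹)
  have hfun : (fun y => heatKernel k y t)
      = fun y => (Real.sqrt (4 * π * k * t))⁻¹ * Real.exp (-(y ^ 2) / (4 * k * t)) := rfl
  rw [hfun]
  refine h3.congr_deriv ?_
  unfold heatKernel
  field_simp
  ring

lemma hasDerivAt_heatKernel_xx {k t : ℝ} (hk : 0 < k) (ht : 0 < t) (y : ℝ) :
    HasDerivAt (fun y => -(y / (2 * k * t)) * heatKernel k y t)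
      ((y ^ 2 / (4 * k ^ 2 * t ^ 2) - 1 / (2 * k * t)) * heatKernel k y t) y := by
  have hlin : HasDerivAt (fun y : ℝ => -(y / (2 * k * t))) (-(1 / (2 * k * t))) y := by
    exact ((hasDerivAt_id y).div_const (2 * k * t)).neg
  have h := hlin.mul (hasDerivAt_heatKernel_x hk ht y)
  refine h.congr_deriv ?_
  field_simp
  ring

lemma heatKernel_factor (k y : ℝ) (hk : 0 < k) : ∀ s : ℝ,
    heatKernel k y s
      = (Real.sqrt (4 * π * k))⁻¹ * ((Real.sqrt s)⁻¹ * Real.exp (-(y ^ 2) / (4 * k) * s⁻¹)) := by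
  intro s
  unfold heatKernel
  rw [show 4 * π * k * s = (4 * π * k) * s by ring, Real.sqrt_mul (by positivity) s, mul_inv]
  rw [show -(y ^ 2) / (4 * k * s) = -(y ^ 2) / (4 * k) * s⁻¹ by
    rw [div_mul_eq_div_div_swap, div_div]; ring_nf]
  ring

lemma hasDerivAt_heatKernel_t {k t : ℝ} (hk : 0 < k) (ht : 0 < t) (y : ℝ) :
    HasDerivAt (fun s => heatKernel k y s)
      (k * ((y ^ 2 / (4 * k ^ 2 * t ^ 2) - 1 / (2 * k * t)) * heatKernel k y t)) t := by
  have hst : 0 < Real.sqrt t := Real.sqrt_pos.mpr ht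
  have hfun : (fun s => heatKernel k y s)
      = fun s => (Real.sqrt (4 * π * k))⁻¹
          * ((Real.sqrt s)⁻¹ * Real.exp (-(y ^ 2) / (4 * k) * s⁻¹)) :=
    funext (heatKernel_factor k y hk)
  rw [hfun]
  have hsq : HasDerivAt (fun s : ℝ => (Real.sqrt s)⁻¹)
      (-(1 / (2 * Real.sqrt t)) / (Real.sqrt t) ^ 2) t :=
    (Real.hasDerivAt_sqrt ht.ne').inv hst.ne'
  have hexp : HasDerivAt (fun s : ℝ => Real.exp (-(y ^ 2) / (4 * k) * s⁻¹))
      (Real.exp (-(y ^ 2) / (4 * k) * t⁻¹) * (-(y ^ 2) / (4 * k) * (-(t ^ 2)⁻¹))) t := by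
    have h1 : HasDerivAt (fun s : ℝ => -(y ^ 2) / (4 * k) * s⁻¹)
        (-(y ^ 2) / (4 * k) * (-(t ^ 2)⁻¹)) t := (hasDerivAt_inv ht.ne').const_mul _
    exact h1.exp
  have h := (hsq.mul hexp).const_mul ((Real.sqrt (4 * π * k))⁻¹)
  refine h.congr_deriv ?_
  rw [heatKernel_factor k y hk t]
  have h2 : (Real.sqrt t) ^ 2 = t := Real.sq_sqrt ht.le
  field_simp
  rw [h2]
  nlinarith [Real.exp_pos (-(y ^ 2) / (4 * k) * t⁻¹), sq_nonneg y, h2,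
    mul_pos hst hst]

lemma continuous_hk_shift (k x t : ℝ) : Continuous fun ξ : ℝ => heatKernel k (x - ξ) t := by
  unfold heatKernel
  exact continuous_const.mul (Real.continuous_exp.comp
    ((((continuous_const.sub continuous_id).pow 2).neg).div_const _))

lemma integrable_hk_mul {k t : ℝ} (hk : 0 < k) (ht : 0 < t) {g : ℝ → ℝ} (hgc : Continuous g)
    {Cg : ℝ} (hCg : ∀ x, |g x| ≤ Cg) (x : ℝ) :
    Integrable fun ξ => heatKernel k (x - ξ) t * g ξ := by
  have h1 : Integrable fun ξ : ℝ => heatKernel k (x - ξ) t :=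
    (integrable_heatKernel hk ht).comp_sub_left x
  have h2 := h1.bdd_mul (c := Cg) hgc.aestronglyMeasurable (ae_of_all _ fun ξ => by simpa using hCg ξ)
  simpa [mul_comm] using h2

lemma hasDerivAt_R_x {k t : ℝ} (hk : 0 < k) (ht : 0 < t) {g : ℝ → ℝ} (hgc : Continuous g)
    {Cg : ℝ} (hCg : ∀ x, |g x| ≤ Cg) (x0 : ℝ) :
    Integrable (fun ξ => (-((x0 - ξ) / (2 * k * t)) * heatKernel k (x0 - ξ) t) * g ξ) ∧
    HasDerivAt (fun x => ∫ ξ : ℝ, heatKernel k (x - ξ) t * g ξ)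
      (∫ ξ : ℝ, (-((x0 - ξ) / (2 * k * t)) * heatKernel k (x0 - ξ) t) * g ξ) x0 := by
  have hCg0 : 0 ≤ Cg := le_trans (abs_nonneg _) (hCg 0)
  have hc1pos : 0 < (Real.sqrt (4 * π * k * t))⁻¹ :=
    inv_pos.mpr (Real.sqrt_pos.mpr (by positivity))
  have h2kt : (0:ℝ) < 2 * k * t := by positivity
  have h8kt : (0:ℝ) < 8 * k * t := by positivity
  refine hasDerivAt_integral_of_dominated_loc_of_deriv_le (μ := volume) (x₀ := x0)
      (F := fun x ξ => heatKernel k (x - ξ) t * g ξ)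
      (F' := fun x ξ => (-((x - ξ) / (2 * k * t)) * heatKernel k (x - ξ) t) * g ξ)
      (bound := fun ξ => (Cg * (Real.sqrt (4 * π * k * t))⁻¹ * (2 / (2 * k * t))
          * Real.exp (1 / (4 * k * t)))
          * Real.exp (-(1 / (8 * k * t)) * (x0 - ξ) ^ 2 + 2 * |x0 - ξ|))
      (ball_mem_nhds x0 one_pos) ?_ ?_ ?_ ?_ ?_ ?_
  · exact Eventually.of_forall fun x => ((continuous_hk_shift k x t).mul hgc).aestronglyMeasurable
  · exact integrable_hk_mul hk ht hgc hCg x0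
  · refine Continuous.aestronglyMeasurable ?_
    exact ((((continuous_const.sub continuous_id).div_const _).neg).mul
      (continuous_hk_shift k x0 t)).mul hgc
  · filter_upwards with ξ x hx
    have hxx0 : |x - x0| ≤ 1 := by simpa [Real.dist_eq] using (mem_ball.mp hx).le
    set y := x - ξ with hy
    set y0 := x0 - ξ with hy0
    have hyy : |y - y0| ≤ 1 := by
      rw [show y - y0 = x - x0 by rw [hy, hy0]; ring]; exact hxx0
    have h0 : (y - y0) ^ 2 ≤ 1 := by
      rw [← sq_abs]; nlinarith [abs_nonneg (y - y0)]
    have h1 : y0 ^ 2 ≤ 2 * y ^ 2 + 2 := by nlinarith [sq_nonneg (y + (y - y0))]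
    have habs : |y| ≤ 2 * Real.exp (2 * |y0|) := by
      have h2 : |y| ≤ |y0| + 1 := by
        have h3 := abs_sub_abs_le_abs_sub y y0
        linarith
      linarith [abs_le_exp_two_abs y0, one_le_exp_two_abs y0]
    have hK : heatKernel k y t ≤ (Real.sqrt (4 * π * k * t))⁻¹
        * (Real.exp (1 / (4 * k * t)) * Real.exp (-(1 / (8 * k * t)) * y0 ^ 2)) := by
      rw [heatKernel_eq]
      refine mul_le_mul_of_nonneg_left ?_ hc1pos.le
      rw [← Real.exp_add]
      refine Real.exp_le_exp.mpr ?_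
      have heq : 1 / (4 * k * t) + -(1 / (8 * k * t)) * y0 ^ 2 - (-(1 / (4 * k * t)) * y ^ 2)
          = (2 + 2 * y ^ 2 - y0 ^ 2) / (8 * k * t) := by field_simp; ring
      have hnn : (0:ℝ) ≤ (2 + 2 * y ^ 2 - y0 ^ 2) / (8 * k * t) :=
        div_nonneg (by linarith) h8kt.le
      linarith
    have hKnn := heatKernel_nonneg k y t
    have hgb := hCg ξ
    rw [Real.norm_eq_abs]
    have hrw : |(-(y / (2 * k * t)) * heatKernel k y t) * g ξ|
        = (|y| / (2 * k * t)) * heatKernel k y t * |g ξ| := by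
      rw [abs_mul, abs_mul, abs_neg, abs_div, abs_of_pos h2kt, abs_of_nonneg hKnn]
    rw [show -(y / (2 * k * t)) * heatKernel k y t * g ξ
        = (-(y / (2 * k * t)) * heatKernel k y t) * g ξ by ring, hrw]
    calc (|y| / (2 * k * t)) * heatKernel k y t * |g ξ|
        ≤ ((2 * Real.exp (2 * |y0|)) / (2 * k * t)) * ((Real.sqrt (4 * π * k * t))⁻¹
            * (Real.exp (1 / (4 * k * t)) * Real.exp (-(1 / (8 * k * t)) * y0 ^ 2))) * Cg := by
          refine mul_le_mul (mul_le_mul ?_ hK hKnn (by positivity)) hgb (abs_nonneg _)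
            (by positivity)
          exact div_le_div_of_nonneg_right habs h2kt.le |>.trans_eq rfl
      _ = Cg * (Real.sqrt (4 * π * k * t))⁻¹ * (2 / (2 * k * t)) * Real.exp (1 / (4 * k * t))
            * Real.exp (-(1 / (8 * k * t)) * y0 ^ 2 + 2 * |y0|) := by
          rw [Real.exp_add]; ring
  · exact integrable_gauss_shift (b := 1/(8*k*t)) (by positivity) 2 _ x0
  · filter_upwards with ξ x _
    have hsub : HasDerivAt (fun x : ℝ => x - ξ) 1 x := (hasDerivAt_id x).sub_const ξ
    have h := ((hasDerivAt_heatKernel_x hk ht (x - ξ)).comp x hsub).mul_const (g ξ)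
    simpa using h


lemma hasDerivAt_R_xx {k t : ℝ} (hk : 0 < k) (ht : 0 < t) {g : ℝ → ℝ} (hgc : Continuous g)
    {Cg : ℝ} (hCg : ∀ x, |g x| ≤ Cg) (x0 : ℝ) :
    Integrable (fun ξ => (((x0 - ξ) ^ 2 / (4 * k ^ 2 * t ^ 2) - 1 / (2 * k * t))
        * heatKernel k (x0 - ξ) t) * g ξ) ∧
    HasDerivAt (fun x => ∫ ξ : ℝ, (-((x - ξ) / (2 * k * t)) * heatKernel k (x - ξ) t) * g ξ)
      (∫ ξ : ℝ, (((x0 - ξ) ^ 2 / (4 * k ^ 2 * t ^ 2) - 1 / (2 * k * t))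
        * heatKernel k (x0 - ξ) t) * g ξ) x0 := by
  have hCg0 : 0 ≤ Cg := le_trans (abs_nonneg _) (hCg 0)
  have hc1pos : 0 < (Real.sqrt (4 * π * k * t))⁻¹ :=
    inv_pos.mpr (Real.sqrt_pos.mpr (by positivity))
  have h2kt : (0:ℝ) < 2 * k * t := by positivity
  have h8kt : (0:ℝ) < 8 * k * t := by positivity
  refine hasDerivAt_integral_of_dominated_loc_of_deriv_le (μ := volume) (x₀ := x0)
      (F := fun x ξ => (-((x - ξ) / (2 * k * t)) * heatKernel k (x - ξ) t) * g ξ)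
      (F' := fun x ξ => (((x - ξ) ^ 2 / (4 * k ^ 2 * t ^ 2) - 1 / (2 * k * t))
        * heatKernel k (x - ξ) t) * g ξ)
      (bound := fun ξ => (Cg * (Real.sqrt (4 * π * k * t))⁻¹
          * (2 * (2 * (4 * k ^ 2 * t ^ 2)⁻¹ + (2 * k * t)⁻¹)) * Real.exp (1 / (4 * k * t)))
          * Real.exp (-(1 / (8 * k * t)) * (x0 - ξ) ^ 2 + 2 * |x0 - ξ|))
      (ball_mem_nhds x0 one_pos) ?_ ?_ ?_ ?_ ?_ ?_
  · refine Eventually.of_forall fun x => Continuous.aestronglyMeasurable ?_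
    exact ((((continuous_const.sub continuous_id).div_const _).neg).mul
      (continuous_hk_shift k x t)).mul hgc
  · exact (hasDerivAt_R_x hk ht hgc hCg x0).1
  · refine Continuous.aestronglyMeasurable ?_
    exact (((((continuous_const.sub continuous_id).pow 2).div_const _).sub
      continuous_const).mul (continuous_hk_shift k x0 t)).mul hgc
  · filter_upwards with ξ x hx
    have hxx0 : |x - x0| ≤ 1 := by simpa [Real.dist_eq] using (mem_ball.mp hx).le
    set y := x - ξ with hy
    set y0 := x0 - ξ with hy0
    have hyy : |y - y0| ≤ 1 := by
      rw [show y - y0 = x - x0 by rw [hy, hy0]; ring]; exact hxx0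
    have h0 : (y - y0) ^ 2 ≤ 1 := by
      rw [← sq_abs]; nlinarith [abs_nonneg (y - y0)]
    have h1 : y0 ^ 2 ≤ 2 * y ^ 2 + 2 := by nlinarith [sq_nonneg (y + (y - y0))]
    have hy2 : y ^ 2 ≤ 2 * y0 ^ 2 + 2 := by nlinarith [sq_nonneg (y0 + (y0 - y))]
    have hp : (0:ℝ) ≤ (4 * k ^ 2 * t ^ 2)⁻¹ := by positivity
    have hq : (0:ℝ) ≤ (2 * k * t)⁻¹ := by positivity
    have hE1 : (1:ℝ) ≤ Real.exp (2 * |y0|) := one_le_exp_two_abs y0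
    have hE4 : y ^ 2 ≤ 4 * Real.exp (2 * |y0|) := by
      nlinarith [sq_le_exp_two_abs y0, one_le_exp_two_abs y0]
    have h5 : y ^ 2 * (4 * k ^ 2 * t ^ 2)⁻¹
        ≤ (4 * Real.exp (2 * |y0|)) * (4 * k ^ 2 * t ^ 2)⁻¹ :=
      mul_le_mul_of_nonneg_right hE4 hp
    have h6 : (2 * k * t)⁻¹ ≤ (2 * Real.exp (2 * |y0|)) * (2 * k * t)⁻¹ := by
      nlinarith
    have hynn : (0:ℝ) ≤ y ^ 2 * (4 * k ^ 2 * t ^ 2)⁻¹ := mul_nonneg (sq_nonneg y) hp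
    have hcoef : |y ^ 2 / (4 * k ^ 2 * t ^ 2) - 1 / (2 * k * t)|
        ≤ (2 * Real.exp (2 * |y0|)) * (2 * (4 * k ^ 2 * t ^ 2)⁻¹ + (2 * k * t)⁻¹) := by
      rw [div_eq_mul_inv, one_div]
      have hEp : (0:ℝ) ≤ Real.exp (2 * |y0|) * (4 * k ^ 2 * t ^ 2)⁻¹ := by positivity
      refine abs_le.mpr ⟨by nlinarith, by nlinarith⟩
    have hK : heatKernel k y t ≤ (Real.sqrt (4 * π * k * t))⁻¹
        * (Real.exp (1 / (4 * k * t)) * Real.exp (-(1 / (8 * k * t)) * y0 ^ 2)) := by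
      rw [heatKernel_eq]
      refine mul_le_mul_of_nonneg_left ?_ hc1pos.le
      rw [← Real.exp_add]
      refine Real.exp_le_exp.mpr ?_
      have heq : 1 / (4 * k * t) + -(1 / (8 * k * t)) * y0 ^ 2 - (-(1 / (4 * k * t)) * y ^ 2)
          = (2 + 2 * y ^ 2 - y0 ^ 2) / (8 * k * t) := by field_simp; ring
      have hnn : (0:ℝ) ≤ (2 + 2 * y ^ 2 - y0 ^ 2) / (8 * k * t) :=
        div_nonneg (by linarith) h8kt.le
      linarith
    have hKnn := heatKernel_nonneg k y t
    have hgb := hCg ξ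
    rw [Real.norm_eq_abs]
    have hrw : |((y ^ 2 / (4 * k ^ 2 * t ^ 2) - 1 / (2 * k * t)) * heatKernel k y t) * g ξ|
        = |y ^ 2 / (4 * k ^ 2 * t ^ 2) - 1 / (2 * k * t)| * heatKernel k y t * |g ξ| := by
      rw [abs_mul, abs_mul, abs_of_nonneg hKnn]
    rw [show (y ^ 2 / (4 * k ^ 2 * t ^ 2) - 1 / (2 * k * t)) * heatKernel k y t * g ξ
        = ((y ^ 2 / (4 * k ^ 2 * t ^ 2) - 1 / (2 * k * t)) * heatKernel k y t) * g ξ by ring,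
      hrw]
    calc |y ^ 2 / (4 * k ^ 2 * t ^ 2) - 1 / (2 * k * t)| * heatKernel k y t * |g ξ|
        ≤ ((2 * Real.exp (2 * |y0|)) * (2 * (4 * k ^ 2 * t ^ 2)⁻¹ + (2 * k * t)⁻¹))
            * ((Real.sqrt (4 * π * k * t))⁻¹
            * (Real.exp (1 / (4 * k * t)) * Real.exp (-(1 / (8 * k * t)) * y0 ^ 2))) * Cg := by
          exact mul_le_mul (mul_le_mul hcoef hK hKnn (by positivity)) hgb (abs_nonneg _)
            (by positivity)
      _ = Cg * (Real.sqrt (4 * π * k * t))⁻¹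
            * (2 * (2 * (4 * k ^ 2 * t ^ 2)⁻¹ + (2 * k * t)⁻¹)) * Real.exp (1 / (4 * k * t))
            * Real.exp (-(1 / (8 * k * t)) * y0 ^ 2 + 2 * |y0|) := by
          rw [Real.exp_add]; ring
  · exact integrable_gauss_shift (b := 1/(8*k*t)) (by positivity) 2 _ x0
  · filter_upwards with ξ x _
    have hsub : HasDerivAt (fun x : ℝ => x - ξ) 1 x := (hasDerivAt_id x).sub_const ξ
    have h := ((hasDerivAt_heatKernel_xx hk ht (x - ξ)).comp x hsub).mul_const (g ξ)
    simpa using h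

lemma hasDerivAt_R_t {k t0 : ℝ} (hk : 0 < k) (ht0 : 0 < t0) {g : ℝ → ℝ} (hgc : Continuous g)
    {Cg : ℝ} (hCg : ∀ x, |g x| ≤ Cg) (x : ℝ) :
    HasDerivAt (fun s => ∫ ξ : ℝ, heatKernel k (x - ξ) s * g ξ)
      (k * ∫ ξ : ℝ, (((x - ξ) ^ 2 / (4 * k ^ 2 * t0 ^ 2) - 1 / (2 * k * t0))
        * heatKernel k (x - ξ) t0) * g ξ) t0 := by
  have hCg0 : 0 ≤ Cg := le_trans (abs_nonneg _) (hCg 0)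
  have hc2pos : 0 < (Real.sqrt (2 * π * k * t0))⁻¹ :=
    inv_pos.mpr (Real.sqrt_pos.mpr (by positivity))
  refine (hasDerivAt_integral_of_dominated_loc_of_deriv_le (μ := volume) (x₀ := t0)
      (F := fun s ξ => heatKernel k (x - ξ) s * g ξ)
      (F' := fun s ξ => (k * (((x - ξ) ^ 2 / (4 * k ^ 2 * s ^ 2) - 1 / (2 * k * s))
        * heatKernel k (x - ξ) s)) * g ξ)
      (bound := fun ξ => (Cg * k * ((k ^ 2 * t0 ^ 2)⁻¹ + (k * t0)⁻¹)
          * (Real.sqrt (2 * π * k * t0))⁻¹)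
          * Real.exp (-(1 / (6 * k * t0)) * (x - ξ) ^ 2 + 2 * |x - ξ|))
      (ball_mem_nhds t0 (half_pos ht0)) ?_ ?_ ?_ ?_ ?_ ?_).2.congr_deriv ?_
  rotate_right
  · rw [← integral_const_mul]
    congr 1
    funext a
    ring
  · exact Eventually.of_forall fun s => ((continuous_hk_shift k x s).mul hgc).aestronglyMeasurable
  · exact integrable_hk_mul hk ht0 hgc hCg x
  · refine Continuous.aestronglyMeasurable ?_
    exact (continuous_const.mul ((((((continuous_const.sub continuous_id).pow 2).div_const _).sub
      continuous_const)).mul (continuous_hk_shift k x t0))).mul hgc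
  · filter_upwards with ξ s hs
    have hst : |s - t0| < t0 / 2 := by simpa [Real.dist_eq] using mem_ball.mp hs
    have hs1 : t0 / 2 < s := by cases' abs_lt.mp hst with h1 h2; linarith
    have hs2 : s < 3 * t0 / 2 := by cases' abs_lt.mp hst with h1 h2; linarith
    have hspos : 0 < s := lt_trans (half_pos ht0) hs1
    set y := x - ξ with hy
    have hKnn := heatKernel_nonneg k y s
    have hgb := hCg ξ
    -- kernel bound
    have hK : heatKernel k y s ≤ (Real.sqrt (2 * π * k * t0))⁻¹
        * Real.exp (-(1 / (6 * k * t0)) * y ^ 2) := by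
      rw [heatKernel_eq]
      have hsq : Real.sqrt (2 * π * k * t0) ≤ Real.sqrt (4 * π * k * s) := by
        apply Real.sqrt_le_sqrt
        nlinarith [mul_pos (mul_pos Real.pi_pos hk) (show 0 < 2 * s - t0 by linarith)]
      have hinv : (Real.sqrt (4 * π * k * s))⁻¹ ≤ (Real.sqrt (2 * π * k * t0))⁻¹ := by
        apply inv_anti₀ (Real.sqrt_pos.mpr (by positivity)) hsq
      have hexp : Real.exp (-(1 / (4 * k * s)) * y ^ 2)
          ≤ Real.exp (-(1 / (6 * k * t0)) * y ^ 2) := by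
        apply Real.exp_le_exp.mpr
        have h4 : (0:ℝ) < 4 * k * s := by positivity
        have h6 : (0:ℝ) < 6 * k * t0 := by positivity
        have hle : 4 * k * s ≤ 6 * k * t0 := by nlinarith
        have := one_div_le_one_div_of_le h4 hle
        nlinarith [sq_nonneg y]
      calc (Real.sqrt (4 * π * k * s))⁻¹ * Real.exp (-(1 / (4 * k * s)) * y ^ 2)
          ≤ (Real.sqrt (2 * π * k * t0))⁻¹ * Real.exp (-(1 / (4 * k * s)) * y ^ 2) :=
            mul_le_mul_of_nonneg_right hinv (Real.exp_nonneg _)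
        _ ≤ (Real.sqrt (2 * π * k * t0))⁻¹ * Real.exp (-(1 / (6 * k * t0)) * y ^ 2) :=
            mul_le_mul_of_nonneg_left hexp hc2pos.le
    -- coefficient bound
    have hcoef : |y ^ 2 / (4 * k ^ 2 * s ^ 2) - 1 / (2 * k * s)|
        ≤ Real.exp (2 * |y|) * ((k ^ 2 * t0 ^ 2)⁻¹ + (k * t0)⁻¹) := by
      have hA : (0:ℝ) ≤ y ^ 2 / (4 * k ^ 2 * s ^ 2) := by positivity
      have hB : (0:ℝ) ≤ 1 / (2 * k * s) := by positivity
      have htri : |y ^ 2 / (4 * k ^ 2 * s ^ 2) - 1 / (2 * k * s)|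
          ≤ y ^ 2 / (4 * k ^ 2 * s ^ 2) + 1 / (2 * k * s) :=
        abs_le.mpr ⟨by linarith, by linarith⟩
      have c1 : y ^ 2 / (4 * k ^ 2 * s ^ 2) ≤ y ^ 2 * (k ^ 2 * t0 ^ 2)⁻¹ := by
        rw [div_eq_mul_inv]
        refine mul_le_mul_of_nonneg_left ?_ (sq_nonneg y)
        apply inv_anti₀ (by positivity)
        nlinarith [mul_pos (mul_pos hk hk) (show 0 < 4 * s ^ 2 - t0 ^ 2 by nlinarith)]
      have c2 : 1 / (2 * k * s) ≤ (k * t0)⁻¹ := by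
        rw [one_div]
        apply inv_anti₀ (by positivity)
        nlinarith [mul_pos hk (show 0 < 2 * s - t0 by linarith)]
      have hEy : y ^ 2 ≤ Real.exp (2 * |y|) := sq_le_exp_two_abs y
      have hE1 : (1:ℝ) ≤ Real.exp (2 * |y|) := one_le_exp_two_abs y
      have hpk : (0:ℝ) ≤ (k ^ 2 * t0 ^ 2)⁻¹ := by positivity
      have hpk2 : (0:ℝ) ≤ (k * t0)⁻¹ := by positivity
      nlinarith [mul_le_mul_of_nonneg_right hEy hpk]
    rw [Real.norm_eq_abs]
    have hrw : |(k * ((y ^ 2 / (4 * k ^ 2 * s ^ 2) - 1 / (2 * k * s)) * heatKernel k y s)) * g ξ|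
        = k * (|y ^ 2 / (4 * k ^ 2 * s ^ 2) - 1 / (2 * k * s)| * heatKernel k y s) * |g ξ| := by
      rw [abs_mul, abs_mul, abs_mul, abs_of_pos hk, abs_of_nonneg hKnn]
    rw [hrw]
    calc k * (|y ^ 2 / (4 * k ^ 2 * s ^ 2) - 1 / (2 * k * s)| * heatKernel k y s) * |g ξ|
        ≤ k * ((Real.exp (2 * |y|) * ((k ^ 2 * t0 ^ 2)⁻¹ + (k * t0)⁻¹))
            * ((Real.sqrt (2 * π * k * t0))⁻¹ * Real.exp (-(1 / (6 * k * t0)) * y ^ 2))) * Cg := by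
          refine mul_le_mul (mul_le_mul_of_nonneg_left
            (mul_le_mul hcoef hK hKnn (by positivity)) hk.le) hgb (abs_nonneg _) (by positivity)
      _ = (Cg * k * ((k ^ 2 * t0 ^ 2)⁻¹ + (k * t0)⁻¹) * (Real.sqrt (2 * π * k * t0))⁻¹)
            * Real.exp (-(1 / (6 * k * t0)) * y ^ 2 + 2 * |y|) := by
          rw [Real.exp_add]; ring
  · exact integrable_gauss_shift (b := 1/(6*k*t0)) (by positivity) 2 _ x
  · filter_upwards with ξ s hs
    have hst : |s - t0| < t0 / 2 := by simpa [Real.dist_eq] using mem_ball.mp hs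
    have hspos : 0 < s := by cases' abs_lt.mp hst with h1 h2; linarith
    exact (hasDerivAt_heatKernel_t hk hspos (x - ξ)).mul_const (g ξ)

noncomputable def QQ (k : ℝ) (g : ℝ → ℝ) (p : ℝ × ℝ) : ℝ :=
  ∫ z : ℝ, (Real.sqrt (4 * π * k))⁻¹ * Real.exp (-(z ^ 2) / (4 * k))
      * g (p.1 - Real.sqrt p.2 * z)

lemma integrable_phi {k : ℝ} (hk : 0 < k) :
    Integrable (fun z : ℝ => (Real.sqrt (4 * π * k))⁻¹ * Real.exp (-(z ^ 2) / (4 * k))) := by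
  simp_rw [show ∀ z : ℝ, -(z ^ 2) / (4 * k) = -(1 / (4 * k)) * z ^ 2 from fun z => by ring]
  exact (integrable_exp_neg_mul_sq (by positivity)).const_mul _

lemma integral_phi {k : ℝ} (hk : 0 < k) :
    ∫ z : ℝ, (Real.sqrt (4 * π * k))⁻¹ * Real.exp (-(z ^ 2) / (4 * k)) = 1 := by
  simp_rw [show ∀ z : ℝ, -(z ^ 2) / (4 * k) = -(1 / (4 * k)) * z ^ 2 from fun z => by ring,
    integral_const_mul, integral_gaussian]
  rw [show π / (1 / (4 * k)) = 4 * π * k by rw [one_div, div_eq_mul_inv, inv_inv]; ring]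
  exact inv_mul_cancel₀ (Real.sqrt_pos.mpr (by positivity)).ne'

lemma continuous_phi (k : ℝ) :
    Continuous fun z : ℝ => (Real.sqrt (4 * π * k))⁻¹ * Real.exp (-(z ^ 2) / (4 * k)) :=
  continuous_const.mul (Real.continuous_exp.comp (((continuous_pow 2).neg).div_const _))

lemma phi_nonneg (k : ℝ) (z : ℝ) :
    0 ≤ (Real.sqrt (4 * π * k))⁻¹ * Real.exp (-(z ^ 2) / (4 * k)) :=
  mul_nonneg (inv_nonneg.2 (Real.sqrt_nonneg _)) (Real.exp_pos _).le

lemma QQ_cont {k : ℝ} (hk : 0 < k) {g : ℝ → ℝ} (hgc : Continuous g)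
    {Cg : ℝ} (hCg : ∀ x, |g x| ≤ Cg) : Continuous (QQ k g) := by
  rw [continuous_iff_continuousAt]
  intro p0
  apply continuousAt_of_dominated (bound := fun z : ℝ =>
      ((Real.sqrt (4 * π * k))⁻¹ * Real.exp (-(z ^ 2) / (4 * k))) * Cg)
  · filter_upwards with p
    exact ((continuous_phi k).mul (hgc.comp
      (continuous_const.sub (continuous_const.mul continuous_id)))).aestronglyMeasurable
  · filter_upwards with p
    filter_upwards with z
    rw [Real.norm_eq_abs, abs_mul, abs_of_nonneg (phi_nonneg k z)]
    exact mul_le_mul_of_nonneg_left (hCg _) (phi_nonneg k z)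
  · exact (integrable_phi hk).mul_const Cg
  · filter_upwards with z
    exact (continuous_const.mul (hgc.comp (continuous_fst.sub
      ((Real.continuous_sqrt.comp continuous_snd).mul continuous_const)))).continuousAt

lemma QQ_zero {k : ℝ} (hk : 0 < k) {g : ℝ → ℝ} (x : ℝ) : QQ k g (x, 0) = g x := by
  unfold QQ
  simp only [Real.sqrt_zero, zero_mul, sub_zero]
  rw [integral_mul_const, integral_phi hk, one_mul]

lemma QQ_nonneg {k : ℝ} {g : ℝ → ℝ} (hgpos : ∀ x, 0 ≤ g x) (p : ℝ × ℝ) : 0 ≤ QQ k g p :=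
  integral_nonneg fun z => mul_nonneg (phi_nonneg k z) (hgpos _)

lemma QQ_le {k : ℝ} (hk : 0 < k) {g : ℝ → ℝ} (hgc : Continuous g)
    {Cg : ℝ} (hCg : ∀ x, |g x| ≤ Cg) (p : ℝ × ℝ) : QQ k g p ≤ Cg := by
  have hint : Integrable (fun z : ℝ => (Real.sqrt (4 * π * k))⁻¹ * Real.exp (-(z ^ 2) / (4 * k))
      * g (p.1 - Real.sqrt p.2 * z)) := by
    have h2 := (integrable_phi hk).bdd_mul
      (f := fun z : ℝ => g (p.1 - Real.sqrt p.2 * z))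
      (hgc.comp (continuous_const.sub (continuous_const.mul continuous_id))).aestronglyMeasurable
      (c := Cg) (ae_of_all _ fun z => by simpa using hCg _)
    simpa [mul_comm] using h2
  calc QQ k g p ≤ ∫ z : ℝ, ((Real.sqrt (4 * π * k))⁻¹ * Real.exp (-(z ^ 2) / (4 * k))) * Cg := by
        refine integral_mono hint ((integrable_phi hk).mul_const Cg) fun z => ?_
        exact mul_le_mul_of_nonneg_left (le_trans (le_abs_self _) (hCg _)) (phi_nonneg k z)
    _ = Cg := by rw [integral_mul_const, integral_phi hk, one_mul]

lemma sqrt_mul_heatKernel {k t : ℝ} (hk : 0 < k) (ht : 0 < t) (z : ℝ) :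
    Real.sqrt t * heatKernel k (Real.sqrt t * z) t
      = (Real.sqrt (4 * π * k))⁻¹ * Real.exp (-(z ^ 2) / (4 * k)) := by
  have hst : 0 < Real.sqrt t := Real.sqrt_pos.mpr ht
  unfold heatKernel
  rw [show 4 * π * k * t = (4 * π * k) * t by ring, Real.sqrt_mul (by positivity) t, mul_inv]
  rw [mul_pow, Real.sq_sqrt ht.le]
  rw [show -(t * z ^ 2) / (4 * k * t) = -(z ^ 2) / (4 * k) by
    field_simp]
  field_simp

lemma QQ_eq {k t : ℝ} (hk : 0 < k) (ht : 0 < t) {g : ℝ → ℝ} (x : ℝ) :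
    QQ k g (x, t) = ∫ ξ : ℝ, heatKernel k (x - ξ) t * g ξ := by
  have hst : 0 < Real.sqrt t := Real.sqrt_pos.mpr ht
  have h1 : (∫ ξ : ℝ, heatKernel k (x - ξ) t * g ξ)
      = ∫ y : ℝ, heatKernel k y t * g (x - y) := by
    rw [← integral_sub_left_eq_self (fun y => heatKernel k y t * g (x - y)) volume x]
    congr 1; funext ξ; rw [sub_sub_cancel]
  have h2 := MeasureTheory.Measure.integral_comp_mul_left
    (fun y => heatKernel k y t * g (x - y)) (Real.sqrt t)
  rw [abs_of_pos (inv_pos.mpr hst), smul_eq_mul] at h2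
  have h3 : (∫ y : ℝ, heatKernel k y t * g (x - y))
      = Real.sqrt t * ∫ z : ℝ, heatKernel k (Real.sqrt t * z) t * g (x - Real.sqrt t * z) := by
    rw [h2, ← mul_assoc, mul_inv_cancel₀ hst.ne', one_mul]
  rw [h1, h3, ← integral_const_mul]
  unfold QQ
  congr 1
  funext z
  rw [show Real.sqrt t * (heatKernel k (Real.sqrt t * z) t * g (x - Real.sqrt t * z))
      = (Real.sqrt t * heatKernel k (Real.sqrt t * z) t) * g (x - Real.sqrt t * z) by ring,
    sqrt_mul_heatKernel hk ht z]

lemma secondDeriv_nonneg_of_isLocalMin {f f' : ℝ → ℝ} {a d : ℝ}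
    (hf : ∀ x, HasDerivAt f (f' x) x) (hmin : IsLocalMin f a)
    (hd : HasDerivAt f' d a) : 0 ≤ d := by
  by_contra hcon
  push_neg at hcon
  have hfa : f' a = 0 := hmin.hasDerivAt_eq_zero (hf a)
  have hslope : Tendsto (slope f' a) (𝓝[>] a) (𝓝 d) :=
    (hasDerivAt_iff_tendsto_slope.mp hd).mono_left
      (nhdsWithin_mono a fun y hy => Set.mem_compl_singleton_iff.mpr (ne_of_gt hy))
  have hneg : ∀ᶠ y in 𝓝[>] a, f' y < 0 := by
    have hlt := hslope.eventually_lt_const (show d < d / 2 by linarith)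
    filter_upwards [hlt, self_mem_nhdsWithin] with y hy1 hy2
    have hya : 0 < y - a := sub_pos.mpr hy2
    rw [slope_def_field, hfa, sub_zero] at hy1
    have := (div_lt_iff₀ hya).mp hy1
    nlinarith
  have hminev : ∀ᶠ y in 𝓝[>] a, f a ≤ f y := hmin.filter_mono nhdsWithin_le_nhds
  obtain ⟨u, hu, hsub⟩ := mem_nhdsGT_iff_exists_Ioo_subset.mp (hneg.and hminev)
  have hau : a < u := mem_Ioi.mp hu
  set b := (a + u) / 2 with hb
  have hab : a < b := by rw [hb]; linarith
  have hbu : b < u := by rw [hb]; linarith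
  have hanti : StrictAntiOn f (Icc a b) := by
    apply strictAntiOn_of_deriv_neg (convex_Icc a b)
    · exact fun x _ => (hf x).differentiableAt.continuousAt.continuousWithinAt
    · intro x hx
      rw [interior_Icc] at hx
      rw [(hf x).deriv]
      exact (hsub ⟨hx.1, lt_trans hx.2 hbu⟩).1
  have h1 : f b < f a := hanti (left_mem_Icc.mpr hab.le) (right_mem_Icc.mpr hab.le) hab
  have h2 : f a ≤ f b := (hsub ⟨hab, hbu⟩).2
  linarith

lemma min_principle (k T' : ℝ) (hk : 0 < k) (hT' : 0 < T')
    (z zx zxx zt c : ℝ → ℝ → ℝ)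
    (hzcont : Continuous fun p : ℝ × ℝ => z p.1 p.2)
    (C : ℝ) (hbdd : ∀ x : ℝ, ∀ t ∈ Icc (0:ℝ) T', -C ≤ z x t)
    (hzx : ∀ x : ℝ, ∀ t ∈ Ioc (0:ℝ) T', HasDerivAt (fun y => z y t) (zx x t) x)
    (hzxx : ∀ x : ℝ, ∀ t ∈ Ioc (0:ℝ) T', HasDerivAt (fun y => zx y t) (zxx x t) x)
    (hzt : ∀ x : ℝ, ∀ t ∈ Ioc (0:ℝ) T', HasDerivAt (fun s => z x s) (zt x t) t)
    (hc : ∀ x : ℝ, ∀ t ∈ Ioc (0:ℝ) T', c x t ≤ 0)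
    (hineq : ∀ x : ℝ, ∀ t ∈ Ioc (0:ℝ) T', k * zxx x t + c x t * z x t ≤ zt x t)
    (hz0 : ∀ x : ℝ, 0 ≤ z x 0) :
    ∀ x : ℝ, ∀ t ∈ Icc (0:ℝ) T', 0 ≤ z x t := by
  intro xs ts hts
  have key : ∀ ε : ℝ, 0 < ε → 0 ≤ z xs ts + ε * (xs ^ 2 + (2 * k + 1) * ts + 1) := by
    intro ε hε
    by_contra hcon
    push_neg at hcon
    set C0 := max C 0 with hC0
    have hC0nn : 0 ≤ C0 := le_max_right _ _
    have hbdd0 : ∀ x : ℝ, ∀ t ∈ Icc (0:ℝ) T', -C0 ≤ z x t := fun x t ht =>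
      le_trans (neg_le_neg (le_max_left _ _)) (hbdd x t ht)
    set M := Real.sqrt (C0 / ε) + |xs| + 1 with hM
    have hsnn : 0 ≤ Real.sqrt (C0 / ε) := Real.sqrt_nonneg _
    have hMx : |xs| < M := by rw [hM]; linarith
    have hMpos : 0 < M := lt_of_le_of_lt (abs_nonneg xs) hMx
    have hM2 : C0 < ε * M ^ 2 := by
      have h1 : Real.sqrt (C0 / ε) ^ 2 = C0 / ε := Real.sq_sqrt (by positivity)
      have h4 : C0 / ε < M ^ 2 := by nlinarith [abs_nonneg xs]
      calc C0 = ε * (C0 / ε) := by field_simp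
        _ < ε * M ^ 2 := by exact mul_lt_mul_of_pos_left h4 hε
    set V : ℝ × ℝ → ℝ := fun p => z p.1 p.2 + ε * (p.1 ^ 2 + (2 * k + 1) * p.2 + 1) with hV
    have hVcont : Continuous V :=
      hzcont.add (continuous_const.mul (((continuous_fst.pow 2).add
        (continuous_const.mul continuous_snd)).add continuous_const))
    set S : Set (ℝ × ℝ) := Icc (-M) M ×ˢ Icc 0 T' with hS
    have hScomp : IsCompact S := isCompact_Icc.prod isCompact_Icc
    have hxsmem : (xs, ts) ∈ S := by
      refine ⟨?_, hts⟩
      exact abs_le.mp hMx.le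
    obtain ⟨p0, hp0S, hp0min⟩ := hScomp.exists_isMinOn ⟨_, hxsmem⟩ hVcont.continuousOn
    have hp0x : p0.1 ∈ Icc (-M) M := hp0S.1
    have hp0t : p0.2 ∈ Icc (0:ℝ) T' := hp0S.2
    have hminle : V p0 ≤ V (xs, ts) := hp0min hxsmem
    have hVxs : V (xs, ts) < 0 := hcon
    have hVneg : V p0 < 0 := lt_of_le_of_lt hminle hVxs
    have ht0pos : 0 < p0.2 := by
      rcases eq_or_lt_of_le hp0t.1 with h | h
      · exfalso
        have h0 := hz0 p0.1
        have hVeq : V p0 = z p0.1 p0.2 + ε * (p0.1 ^ 2 + (2 * k + 1) * p0.2 + 1) := rfl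
        rw [← h] at hVeq
        nlinarith [sq_nonneg p0.1]
      · exact h
    have hx0lt : |p0.1| < M := by
      rcases lt_or_ge |p0.1| M with h | h
      · exact h
      exfalso
      have habs : |p0.1| = M := le_antisymm (abs_le.mpr hp0x) h
      have hsq : p0.1 ^ 2 = M ^ 2 := by rw [← sq_abs, habs]
      have hzlow := hbdd0 p0.1 p0.2 hp0t
      have hVeq : V p0 = z p0.1 p0.2 + ε * (p0.1 ^ 2 + (2 * k + 1) * p0.2 + 1) := rfl
      nlinarith [hp0t.1, mul_nonneg (mul_nonneg hε.le (by linarith : (0:ℝ) ≤ 2 * k + 1)) hp0t.1]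
    have ht0mem : p0.2 ∈ Ioc (0:ℝ) T' := ⟨ht0pos, hp0t.2⟩
    -- time derivative at the minimum is ≤ 0
    have hVt : HasDerivAt (fun s => V (p0.1, s)) (zt p0.1 p0.2 + ε * (2 * k + 1)) p0.2 := by
      have h1 := hzt p0.1 p0.2 ht0mem
      have h2 : HasDerivAt (fun s : ℝ => ε * (p0.1 ^ 2 + (2 * k + 1) * s + 1))
          (ε * (2 * k + 1)) p0.2 := by
        have h3 : HasDerivAt (fun s : ℝ => (2 * k + 1) * s) (2 * k + 1) p0.2 := by
          simpa using (hasDerivAt_id p0.2).const_mul (2 * k + 1)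
        simpa using (((h3.const_add (p0.1 ^ 2)).add_const 1).const_mul ε)
      exact h1.add h2
    have hslopele : zt p0.1 p0.2 + ε * (2 * k + 1) ≤ 0 := by
      have htd := hasDerivAt_iff_tendsto_slope.mp hVt
      have htd' : Tendsto (slope (fun s => V (p0.1, s)) p0.2) (𝓝[<] p0.2)
          (𝓝 (zt p0.1 p0.2 + ε * (2 * k + 1))) :=
        htd.mono_left (nhdsWithin_mono _ fun y hy => ne_of_lt hy)
      refine le_of_tendsto htd' ?_
      filter_upwards [Ioo_mem_nhdsLT ht0pos] with s hs
      rw [slope_def_field]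
      have hmem : (p0.1, s) ∈ S := ⟨hp0x, ⟨hs.1.le, hs.2.le.trans hp0t.2⟩⟩
      have hge : V p0 ≤ V (p0.1, s) := hp0min hmem
      have hVp0 : V (p0.1, p0.2) = V p0 := by rw [Prod.mk.eta]
      apply div_nonpos_of_nonneg_of_nonpos
      · rw [hVp0]; linarith
      · linarith [hs.2]
    -- space: local minimum in x
    have hfderiv : ∀ y : ℝ, HasDerivAt
        (fun y => z y p0.2 + ε * (y ^ 2 + (2 * k + 1) * p0.2 + 1))
        (zx y p0.2 + ε * (2 * y)) y := by
      intro y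
      have h1 := hzx y p0.2 ht0mem
      have h2 : HasDerivAt (fun y : ℝ => ε * (y ^ 2 + (2 * k + 1) * p0.2 + 1))
          (ε * (2 * y)) y := by
        have h3 : HasDerivAt (fun y : ℝ => y ^ 2) (2 * y) y := by
          simpa using hasDerivAt_pow 2 y
        simpa using (((h3.add_const ((2 * k + 1) * p0.2)).add_const 1).const_mul ε)
      exact h1.add h2
    have hf2 : HasDerivAt (fun y => zx y p0.2 + ε * (2 * y)) (zxx p0.1 p0.2 + ε * 2) p0.1 := by
      have h1 := hzxx p0.1 p0.2 ht0mem
      have h2 : HasDerivAt (fun y : ℝ => ε * (2 * y)) (ε * 2) p0.1 := by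
        have h3 : HasDerivAt (fun y : ℝ => 2 * y) 2 p0.1 := by
          simpa using (hasDerivAt_id p0.1).const_mul 2
        simpa using h3.const_mul ε
      exact h1.add h2
    have hlocmin : IsLocalMin (fun y => z y p0.2 + ε * (y ^ 2 + (2 * k + 1) * p0.2 + 1)) p0.1 := by
      have hmem : Ioo (-M) M ∈ 𝓝 p0.1 := Ioo_mem_nhds (abs_lt.mp hx0lt).1 (abs_lt.mp hx0lt).2
      filter_upwards [hmem] with y hy
      have hymem : (y, p0.2) ∈ S := ⟨⟨hy.1.le, hy.2.le⟩, hp0t⟩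
      have hge : V p0 ≤ V (y, p0.2) := hp0min hymem
      have hVp0 : V (p0.1, p0.2) = V p0 := by rw [Prod.mk.eta]
      simpa using hge
    have hzxx_ge : 0 ≤ zxx p0.1 p0.2 + ε * 2 :=
      secondDeriv_nonneg_of_isLocalMin hfderiv hlocmin hf2
    have hzneg : z p0.1 p0.2 < 0 := by
      have hVeq : V p0 = z p0.1 p0.2 + ε * (p0.1 ^ 2 + (2 * k + 1) * p0.2 + 1) := rfl
      nlinarith [sq_nonneg p0.1, hp0t.1,
        mul_nonneg (mul_nonneg hε.le (by linarith : (0:ℝ) ≤ 2 * k + 1)) hp0t.1]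
    have hcz : 0 ≤ c p0.1 p0.2 * z p0.1 p0.2 :=
      mul_nonneg_of_nonpos_of_nonpos (hc _ _ ht0mem) hzneg.le
    have hPDE := hineq p0.1 p0.2 ht0mem
    nlinarith [mul_le_mul_of_nonneg_left (show -(2 * ε) ≤ zxx p0.1 p0.2 by linarith) hk.le]
  by_contra hfin
  push_neg at hfin
  set P := xs ^ 2 + (2 * k + 1) * ts + 1 with hP
  have hPpos : 0 < P := by
    have := hts.1
    nlinarith [sq_nonneg xs]
  have hkey := key (-(z xs ts) / (2 * P)) (div_pos (by linarith) (by linarith))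
  have h2 : -(z xs ts) / (2 * P) * P = -(z xs ts) / 2 := by field_simp
  nlinarith


end HeatCmp

open HeatCmp in
/-- Two-sided comparison for the heat equation with a bounded zeroth-order
coefficient: if `u_t = k u_{xx} + q u` with `A ≤ q ≤ B` and nonnegative initial datum `g`,
then `e^{At} R(x,t) ≤ u(x,t) ≤ e^{Bt} R(x,t)` where `R` is the heat extension of `g`;
in particular `u ≥ 0`. -/
theorem comparison_heat_zeroth_order
    (k T A B : ℝ) (hk : 0 < k) (hT : 0 < T)
    (q : ℝ → ℝ → ℝ) (hqmeas : Measurable (Function.uncurry q))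
    (hq : ∀ x : ℝ, ∀ t ∈ Ioo (0 : ℝ) T, A ≤ q x t ∧ q x t ≤ B)
    (g : ℝ → ℝ) (hgcont : Continuous g) (hgbdd : ∃ C, ∀ x, |g x| ≤ C)
    (hgpos : ∀ x, 0 ≤ g x)
    (u ux uxx ut : ℝ → ℝ → ℝ)
    (hucont : Continuous fun p : ℝ × ℝ => u p.1 p.2)
    (hubdd : ∃ C, ∀ x : ℝ, ∀ t ∈ Icc (0 : ℝ) T, |u x t| ≤ C)
    (hux : ∀ x : ℝ, ∀ t ∈ Ioo (0 : ℝ) T, HasDerivAt (fun y => u y t) (ux x t) x)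
    (huxx : ∀ x : ℝ, ∀ t ∈ Ioo (0 : ℝ) T, HasDerivAt (fun y => ux y t) (uxx x t) x)
    (hut : ∀ x : ℝ, ∀ t ∈ Ioo (0 : ℝ) T, HasDerivAt (fun s => u x s) (ut x t) t)
    (huxxcont : ContinuousOn (fun p : ℝ × ℝ => uxx p.1 p.2) (univ ×ˢ Ioo (0 : ℝ) T))
    (hutcont : ContinuousOn (fun p : ℝ × ℝ => ut p.1 p.2) (univ ×ˢ Ioo (0 : ℝ) T))
    (hPDE : ∀ x : ℝ, ∀ t ∈ Ioo (0 : ℝ) T, ut x t = k * uxx x t + q x t * u x t)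
    (hInit : ∀ x : ℝ, u x 0 = g x) :
    ∀ x : ℝ, ∀ t ∈ Ioo (0 : ℝ) T,
      Real.exp (A * t) * (∫ ξ : ℝ, heatKernel k (x - ξ) t * g ξ) ≤ u x t ∧
      u x t ≤ Real.exp (B * t) * (∫ ξ : ℝ, heatKernel k (x - ξ) t * g ξ) ∧
      0 ≤ u x t := by
  open Real Filter Metric Topology in
  intro x t ht
  obtain ⟨Cg, hCg⟩ := hgbdd
  obtain ⟨Cu, hCu⟩ := hubdd
  have hCg0 : 0 ≤ Cg := le_trans (abs_nonneg _) (hCg 0)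
  have hCu0 : 0 ≤ Cu := le_trans (abs_nonneg _) (hCu 0 0 ⟨le_refl 0, hT.le⟩)
  set lam : ℝ := |A| + |B| + 1 with hlam
  have hlam0 : 0 < lam := by positivity
  set T' : ℝ := (t + T) / 2 with hT'
  have hT'0 : 0 < T' := by rw [hT']; linarith [ht.1]
  have htT' : t < T' := by rw [hT']; linarith [ht.2]
  have hT'T : T' < T := by rw [hT']; linarith [ht.2]
  have hsubT : ∀ s ∈ Ioc (0:ℝ) T', s ∈ Ioo (0:ℝ) T :=
    fun s hs => ⟨hs.1, lt_of_le_of_lt hs.2 hT'T⟩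
  have hQcont := QQ_cont hk hgcont hCg
  have hQnn : ∀ p : ℝ × ℝ, 0 ≤ QQ k g p := QQ_nonneg hgpos
  have hQle : ∀ p : ℝ × ℝ, QQ k g p ≤ Cg := QQ_le hk hgcont hCg
  -- ### Upper bound: e^{Bt} Q - u ≥ 0
  have hcontU : Continuous fun p : ℝ × ℝ =>
      Real.exp (-(lam * p.2)) * (Real.exp (B * p.2) * QQ k g (p.1, p.2) - u p.1 p.2) := by
    have h1 : Continuous fun p : ℝ × ℝ => QQ k g (p.1, p.2) := by
      have : (fun p : ℝ × ℝ => QQ k g (p.1, p.2)) = QQ k g := by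
        funext p; rw [Prod.mk.eta]
      rw [this]; exact hQcont
    exact (Real.continuous_exp.comp (continuous_const.mul continuous_snd).neg).mul
      (((Real.continuous_exp.comp (continuous_const.mul continuous_snd)).mul h1).sub hucont)
  have hbddU : ∀ x' : ℝ, ∀ s ∈ Icc (0:ℝ) T',
      -Cu ≤ Real.exp (-(lam * s)) * (Real.exp (B * s) * QQ k g (x', s) - u x' s) := by
    intro x' s hs
    have hE1 : Real.exp (-(lam * s)) ≤ 1 := by
      rw [Real.exp_le_one_iff]
      have := hs.1
      nlinarith
    have hEpos := Real.exp_pos (-(lam * s))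
    have hQ0 : 0 ≤ Real.exp (B * s) * QQ k g (x', s) :=
      mul_nonneg (Real.exp_pos _).le (hQnn _)
    have hub := abs_le.mp (hCu x' s ⟨hs.1, le_trans hs.2 hT'T.le⟩)
    set w : ℝ := Real.exp (B * s) * QQ k g (x', s) - u x' s with hw
    have hwlow : -Cu ≤ w := by rw [hw]; linarith [hub.2]
    rcases le_or_gt 0 w with hw0 | hw0
    · have : 0 ≤ Real.exp (-(lam * s)) * w := mul_nonneg hEpos.le hw0
      linarith
    · have h2 : 1 * w ≤ Real.exp (-(lam * s)) * w := mul_le_mul_of_nonpos_right hE1 hw0.le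
      rw [one_mul] at h2
      linarith
  have hzxU : ∀ x' : ℝ, ∀ s ∈ Ioc (0:ℝ) T', HasDerivAt
      (fun y => Real.exp (-(lam * s)) * (Real.exp (B * s) * QQ k g (y, s) - u y s))
      (Real.exp (-(lam * s)) * (Real.exp (B * s)
        * (∫ ξ : ℝ, (-((x' - ξ) / (2 * k * s)) * heatKernel k (x' - ξ) s) * g ξ) - ux x' s))
      x' := by
    intro x' s hs
    have hQder : HasDerivAt (fun y => QQ k g (y, s))
        (∫ ξ : ℝ, (-((x' - ξ) / (2 * k * s)) * heatKernel k (x' - ξ) s) * g ξ) x' := by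
      rw [show (fun y => QQ k g (y, s)) = fun y => ∫ ξ : ℝ, heatKernel k (y - ξ) s * g ξ from
        funext fun y => QQ_eq hk hs.1 y]
      exact (hasDerivAt_R_x hk hs.1 hgcont hCg x').2
    exact ((hQder.const_mul (Real.exp (B * s))).sub (hux x' s (hsubT s hs))).const_mul _
  have hzxxU : ∀ x' : ℝ, ∀ s ∈ Ioc (0:ℝ) T', HasDerivAt
      (fun y => Real.exp (-(lam * s)) * (Real.exp (B * s)
        * (∫ ξ : ℝ, (-((y - ξ) / (2 * k * s)) * heatKernel k (y - ξ) s) * g ξ) - ux y s))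
      (Real.exp (-(lam * s)) * (Real.exp (B * s)
        * (∫ ξ : ℝ, (((x' - ξ) ^ 2 / (4 * k ^ 2 * s ^ 2) - 1 / (2 * k * s))
            * heatKernel k (x' - ξ) s) * g ξ) - uxx x' s))
      x' := by
    intro x' s hs
    exact (((hasDerivAt_R_xx hk hs.1 hgcont hCg x').2.const_mul (Real.exp (B * s))).sub
      (huxx x' s (hsubT s hs))).const_mul _
  have hztU : ∀ x' : ℝ, ∀ s ∈ Ioc (0:ℝ) T', HasDerivAt
      (fun r => Real.exp (-(lam * r)) * (Real.exp (B * r) * QQ k g (x', r) - u x' r))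
      ((Real.exp (-(lam * s)) * -lam) * (Real.exp (B * s) * QQ k g (x', s) - u x' s)
        + Real.exp (-(lam * s)) * ((Real.exp (B * s) * B) * QQ k g (x', s)
          + Real.exp (B * s) * (k * ∫ ξ : ℝ, (((x' - ξ) ^ 2 / (4 * k ^ 2 * s ^ 2)
              - 1 / (2 * k * s)) * heatKernel k (x' - ξ) s) * g ξ) - ut x' s))
      s := by
    intro x' s hs
    have hE : HasDerivAt (fun r : ℝ => Real.exp (-(lam * r)))
        (Real.exp (-(lam * s)) * -lam) s := by
      have h1 : HasDerivAt (fun r : ℝ => -(lam * r)) (-lam) s := by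
        exact (((hasDerivAt_id s).const_mul lam).neg).congr_deriv (by ring)
      exact h1.exp
    have hEb : HasDerivAt (fun r : ℝ => Real.exp (B * r)) (Real.exp (B * s) * B) s := by
      have h1 : HasDerivAt (fun r : ℝ => B * r) B s := by
        simpa using (hasDerivAt_id s).const_mul B
      exact h1.exp
    have hQder : HasDerivAt (fun r => QQ k g (x', r))
        (k * ∫ ξ : ℝ, (((x' - ξ) ^ 2 / (4 * k ^ 2 * s ^ 2) - 1 / (2 * k * s))
          * heatKernel k (x' - ξ) s) * g ξ) s := by
      refine (hasDerivAt_R_t hk hs.1 hgcont hCg x').congr_of_eventuallyEq ?_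
      filter_upwards [isOpen_Ioi.mem_nhds hs.1] with r hr
      exact QQ_eq hk hr x'
    exact hE.mul ((hEb.mul hQder).sub (hut x' s (hsubT s hs)))
  have hcU : ∀ x' : ℝ, ∀ s ∈ Ioc (0:ℝ) T', q x' s - lam ≤ 0 := by
    intro x' s hs
    have := (hq x' s (hsubT s hs)).2
    have h1 : B ≤ |B| := le_abs_self B
    have h2 : 0 ≤ |A| := abs_nonneg A
    rw [hlam]; linarith
  have hineqU : ∀ x' : ℝ, ∀ s ∈ Ioc (0:ℝ) T',
      k * (Real.exp (-(lam * s)) * (Real.exp (B * s)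
        * (∫ ξ : ℝ, (((x' - ξ) ^ 2 / (4 * k ^ 2 * s ^ 2) - 1 / (2 * k * s))
            * heatKernel k (x' - ξ) s) * g ξ) - uxx x' s))
      + (q x' s - lam) * (Real.exp (-(lam * s)) * (Real.exp (B * s) * QQ k g (x', s) - u x' s))
      ≤ (Real.exp (-(lam * s)) * -lam) * (Real.exp (B * s) * QQ k g (x', s) - u x' s)
        + Real.exp (-(lam * s)) * ((Real.exp (B * s) * B) * QQ k g (x', s)
          + Real.exp (B * s) * (k * ∫ ξ : ℝ, (((x' - ξ) ^ 2 / (4 * k ^ 2 * s ^ 2)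
              - 1 / (2 * k * s)) * heatKernel k (x' - ξ) s) * g ξ) - ut x' s) := by
    intro x' s hs
    have hqs := hq x' s (hsubT s hs)
    have hPDEs := hPDE x' s (hsubT s hs)
    have hQ0 := hQnn (x', s)
    have key : (Real.exp (-(lam * s)) * -lam) * (Real.exp (B * s) * QQ k g (x', s) - u x' s)
        + Real.exp (-(lam * s)) * ((Real.exp (B * s) * B) * QQ k g (x', s)
          + Real.exp (B * s) * (k * ∫ ξ : ℝ, (((x' - ξ) ^ 2 / (4 * k ^ 2 * s ^ 2)
              - 1 / (2 * k * s)) * heatKernel k (x' - ξ) s) * g ξ) - ut x' s)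
        - (k * (Real.exp (-(lam * s)) * (Real.exp (B * s)
          * (∫ ξ : ℝ, (((x' - ξ) ^ 2 / (4 * k ^ 2 * s ^ 2) - 1 / (2 * k * s))
              * heatKernel k (x' - ξ) s) * g ξ) - uxx x' s))
          + (q x' s - lam) * (Real.exp (-(lam * s))
            * (Real.exp (B * s) * QQ k g (x', s) - u x' s)))
        = Real.exp (-(lam * s)) * Real.exp (B * s) * QQ k g (x', s) * (B - q x' s) := by
      rw [hPDEs]; ring
    have hrhs : 0 ≤ Real.exp (-(lam * s)) * Real.exp (B * s) * QQ k g (x', s) * (B - q x' s) :=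
      mul_nonneg (mul_nonneg (mul_nonneg (Real.exp_pos _).le (Real.exp_pos _).le) hQ0)
        (by linarith [hqs.2])
    linarith
  have hz0U : ∀ x' : ℝ, 0 ≤ Real.exp (-(lam * 0))
      * (Real.exp (B * 0) * QQ k g (x', 0) - u x' 0) := by
    intro x'
    simp [QQ_zero hk, hInit]
  have hUpper := min_principle k T' hk hT'0
    (fun x t => Real.exp (-(lam * t)) * (Real.exp (B * t) * QQ k g (x, t) - u x t))
    (fun x t => Real.exp (-(lam * t)) * (Real.exp (B * t)
      * (∫ ξ : ℝ, (-((x - ξ) / (2 * k * t)) * heatKernel k (x - ξ) t) * g ξ) - ux x t))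
    (fun x t => Real.exp (-(lam * t)) * (Real.exp (B * t)
      * (∫ ξ : ℝ, (((x - ξ) ^ 2 / (4 * k ^ 2 * t ^ 2) - 1 / (2 * k * t))
          * heatKernel k (x - ξ) t) * g ξ) - uxx x t))
    (fun x t => (Real.exp (-(lam * t)) * -lam) * (Real.exp (B * t) * QQ k g (x, t) - u x t)
      + Real.exp (-(lam * t)) * ((Real.exp (B * t) * B) * QQ k g (x, t)
        + Real.exp (B * t) * (k * ∫ ξ : ℝ, (((x - ξ) ^ 2 / (4 * k ^ 2 * t ^ 2)
            - 1 / (2 * k * t)) * heatKernel k (x - ξ) t) * g ξ) - ut x t))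
    (fun x t => q x t - lam)
    hcontU Cu hbddU hzxU hzxxU hztU hcU hineqU hz0U
  -- ### Lower bound: u - e^{At} Q ≥ 0
  have hcontL : Continuous fun p : ℝ × ℝ =>
      Real.exp (-(lam * p.2)) * (u p.1 p.2 - Real.exp (A * p.2) * QQ k g (p.1, p.2)) := by
    have h1 : Continuous fun p : ℝ × ℝ => QQ k g (p.1, p.2) := by
      have : (fun p : ℝ × ℝ => QQ k g (p.1, p.2)) = QQ k g := by
        funext p; rw [Prod.mk.eta]
      rw [this]; exact hQcont
    exact (Real.continuous_exp.comp (continuous_const.mul continuous_snd).neg).mul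
      (hucont.sub ((Real.continuous_exp.comp (continuous_const.mul continuous_snd)).mul h1))
  have hbddL : ∀ x' : ℝ, ∀ s ∈ Icc (0:ℝ) T',
      -(Cu + Real.exp (|A| * T) * Cg)
        ≤ Real.exp (-(lam * s)) * (u x' s - Real.exp (A * s) * QQ k g (x', s)) := by
    intro x' s hs
    have hE1 : Real.exp (-(lam * s)) ≤ 1 := by
      rw [Real.exp_le_one_iff]
      have := hs.1
      nlinarith
    have hEpos := Real.exp_pos (-(lam * s))
    have hub := abs_le.mp (hCu x' s ⟨hs.1, le_trans hs.2 hT'T.le⟩)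
    have hEa : Real.exp (A * s) ≤ Real.exp (|A| * T) := by
      apply Real.exp_le_exp.mpr
      have h1 : A * s ≤ |A| * s := mul_le_mul_of_nonneg_right (le_abs_self A) hs.1
      have h2 : |A| * s ≤ |A| * T :=
        mul_le_mul_of_nonneg_left (le_trans hs.2 hT'T.le) (abs_nonneg A)
      linarith
    have hQp := hQnn (x', s)
    have hQl := hQle (x', s)
    have hEaQ : Real.exp (A * s) * QQ k g (x', s) ≤ Real.exp (|A| * T) * Cg := by
      calc Real.exp (A * s) * QQ k g (x', s) ≤ Real.exp (|A| * T) * QQ k g (x', s) :=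
            mul_le_mul_of_nonneg_right hEa hQp
        _ ≤ Real.exp (|A| * T) * Cg := mul_le_mul_of_nonneg_left hQl (Real.exp_pos _).le
    set w : ℝ := u x' s - Real.exp (A * s) * QQ k g (x', s) with hw
    have hwlow : -(Cu + Real.exp (|A| * T) * Cg) ≤ w := by rw [hw]; linarith [hub.1]
    rcases le_or_gt 0 w with hw0 | hw0
    · have h3 : 0 ≤ Real.exp (-(lam * s)) * w := mul_nonneg hEpos.le hw0
      have h4 : (0:ℝ) ≤ Cu + Real.exp (|A| * T) * Cg := by positivity
      linarith
    · have h2 : 1 * w ≤ Real.exp (-(lam * s)) * w := mul_le_mul_of_nonpos_right hE1 hw0.le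
      rw [one_mul] at h2
      linarith
  have hzxL : ∀ x' : ℝ, ∀ s ∈ Ioc (0:ℝ) T', HasDerivAt
      (fun y => Real.exp (-(lam * s)) * (u y s - Real.exp (A * s) * QQ k g (y, s)))
      (Real.exp (-(lam * s)) * (ux x' s - Real.exp (A * s)
        * (∫ ξ : ℝ, (-((x' - ξ) / (2 * k * s)) * heatKernel k (x' - ξ) s) * g ξ)))
      x' := by
    intro x' s hs
    have hQder : HasDerivAt (fun y => QQ k g (y, s))
        (∫ ξ : ℝ, (-((x' - ξ) / (2 * k * s)) * heatKernel k (x' - ξ) s) * g ξ) x' := by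
      rw [show (fun y => QQ k g (y, s)) = fun y => ∫ ξ : ℝ, heatKernel k (y - ξ) s * g ξ from
        funext fun y => QQ_eq hk hs.1 y]
      exact (hasDerivAt_R_x hk hs.1 hgcont hCg x').2
    exact ((hux x' s (hsubT s hs)).sub (hQder.const_mul (Real.exp (A * s)))).const_mul _
  have hzxxL : ∀ x' : ℝ, ∀ s ∈ Ioc (0:ℝ) T', HasDerivAt
      (fun y => Real.exp (-(lam * s)) * (ux y s - Real.exp (A * s)
        * (∫ ξ : ℝ, (-((y - ξ) / (2 * k * s)) * heatKernel k (y - ξ) s) * g ξ)))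
      (Real.exp (-(lam * s)) * (uxx x' s - Real.exp (A * s)
        * (∫ ξ : ℝ, (((x' - ξ) ^ 2 / (4 * k ^ 2 * s ^ 2) - 1 / (2 * k * s))
            * heatKernel k (x' - ξ) s) * g ξ)))
      x' := by
    intro x' s hs
    exact ((huxx x' s (hsubT s hs)).sub
      ((hasDerivAt_R_xx hk hs.1 hgcont hCg x').2.const_mul (Real.exp (A * s)))).const_mul _
  have hztL : ∀ x' : ℝ, ∀ s ∈ Ioc (0:ℝ) T', HasDerivAt
      (fun r => Real.exp (-(lam * r)) * (u x' r - Real.exp (A * r) * QQ k g (x', r)))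
      ((Real.exp (-(lam * s)) * -lam) * (u x' s - Real.exp (A * s) * QQ k g (x', s))
        + Real.exp (-(lam * s)) * (ut x' s - ((Real.exp (A * s) * A) * QQ k g (x', s)
          + Real.exp (A * s) * (k * ∫ ξ : ℝ, (((x' - ξ) ^ 2 / (4 * k ^ 2 * s ^ 2)
              - 1 / (2 * k * s)) * heatKernel k (x' - ξ) s) * g ξ))))
      s := by
    intro x' s hs
    have hE : HasDerivAt (fun r : ℝ => Real.exp (-(lam * r)))
        (Real.exp (-(lam * s)) * -lam) s := by
      have h1 : HasDerivAt (fun r : ℝ => -(lam * r)) (-lam) s := by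
        exact (((hasDerivAt_id s).const_mul lam).neg).congr_deriv (by ring)
      exact h1.exp
    have hEa : HasDerivAt (fun r : ℝ => Real.exp (A * r)) (Real.exp (A * s) * A) s := by
      have h1 : HasDerivAt (fun r : ℝ => A * r) A s := by
        simpa using (hasDerivAt_id s).const_mul A
      exact h1.exp
    have hQder : HasDerivAt (fun r => QQ k g (x', r))
        (k * ∫ ξ : ℝ, (((x' - ξ) ^ 2 / (4 * k ^ 2 * s ^ 2) - 1 / (2 * k * s))
          * heatKernel k (x' - ξ) s) * g ξ) s := by
      refine (hasDerivAt_R_t hk hs.1 hgcont hCg x').congr_of_eventuallyEq ?_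
      filter_upwards [isOpen_Ioi.mem_nhds hs.1] with r hr
      exact QQ_eq hk hr x'
    exact hE.mul ((hut x' s (hsubT s hs)).sub (hEa.mul hQder))
  have hineqL : ∀ x' : ℝ, ∀ s ∈ Ioc (0:ℝ) T',
      k * (Real.exp (-(lam * s)) * (uxx x' s - Real.exp (A * s)
        * (∫ ξ : ℝ, (((x' - ξ) ^ 2 / (4 * k ^ 2 * s ^ 2) - 1 / (2 * k * s))
            * heatKernel k (x' - ξ) s) * g ξ)))
      + (q x' s - lam) * (Real.exp (-(lam * s))
          * (u x' s - Real.exp (A * s) * QQ k g (x', s)))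
      ≤ (Real.exp (-(lam * s)) * -lam) * (u x' s - Real.exp (A * s) * QQ k g (x', s))
        + Real.exp (-(lam * s)) * (ut x' s - ((Real.exp (A * s) * A) * QQ k g (x', s)
          + Real.exp (A * s) * (k * ∫ ξ : ℝ, (((x' - ξ) ^ 2 / (4 * k ^ 2 * s ^ 2)
              - 1 / (2 * k * s)) * heatKernel k (x' - ξ) s) * g ξ))) := by
    intro x' s hs
    have hqs := hq x' s (hsubT s hs)
    have hPDEs := hPDE x' s (hsubT s hs)
    have hQ0 := hQnn (x', s)
    have key : (Real.exp (-(lam * s)) * -lam) * (u x' s - Real.exp (A * s) * QQ k g (x', s))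
        + Real.exp (-(lam * s)) * (ut x' s - ((Real.exp (A * s) * A) * QQ k g (x', s)
          + Real.exp (A * s) * (k * ∫ ξ : ℝ, (((x' - ξ) ^ 2 / (4 * k ^ 2 * s ^ 2)
              - 1 / (2 * k * s)) * heatKernel k (x' - ξ) s) * g ξ)))
        - (k * (Real.exp (-(lam * s)) * (uxx x' s - Real.exp (A * s)
          * (∫ ξ : ℝ, (((x' - ξ) ^ 2 / (4 * k ^ 2 * s ^ 2) - 1 / (2 * k * s))
              * heatKernel k (x' - ξ) s) * g ξ)))
          + (q x' s - lam) * (Real.exp (-(lam * s))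
            * (u x' s - Real.exp (A * s) * QQ k g (x', s))))
        = Real.exp (-(lam * s)) * Real.exp (A * s) * QQ k g (x', s) * (q x' s - A) := by
      rw [hPDEs]; ring
    have hrhs : 0 ≤ Real.exp (-(lam * s)) * Real.exp (A * s) * QQ k g (x', s) * (q x' s - A) :=
      mul_nonneg (mul_nonneg (mul_nonneg (Real.exp_pos _).le (Real.exp_pos _).le) hQ0)
        (by linarith [hqs.1])
    linarith
  have hz0L : ∀ x' : ℝ, 0 ≤ Real.exp (-(lam * 0))
      * (u x' 0 - Real.exp (A * 0) * QQ k g (x', 0)) := by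
    intro x'
    simp [QQ_zero hk, hInit]
  have hLower := min_principle k T' hk hT'0
    (fun x t => Real.exp (-(lam * t)) * (u x t - Real.exp (A * t) * QQ k g (x, t)))
    (fun x t => Real.exp (-(lam * t)) * (ux x t - Real.exp (A * t)
      * (∫ ξ : ℝ, (-((x - ξ) / (2 * k * t)) * heatKernel k (x - ξ) t) * g ξ)))
    (fun x t => Real.exp (-(lam * t)) * (uxx x t - Real.exp (A * t)
      * (∫ ξ : ℝ, (((x - ξ) ^ 2 / (4 * k ^ 2 * t ^ 2) - 1 / (2 * k * t))
          * heatKernel k (x - ξ) t) * g ξ)))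
    (fun x t => (Real.exp (-(lam * t)) * -lam) * (u x t - Real.exp (A * t) * QQ k g (x, t))
      + Real.exp (-(lam * t)) * (ut x t - ((Real.exp (A * t) * A) * QQ k g (x, t)
        + Real.exp (A * t) * (k * ∫ ξ : ℝ, (((x - ξ) ^ 2 / (4 * k ^ 2 * t ^ 2)
            - 1 / (2 * k * t)) * heatKernel k (x - ξ) t) * g ξ))))
    (fun x t => q x t - lam)
    hcontL (Cu + Real.exp (|A| * T) * Cg) hbddL hzxL hzxxL hztL hcU hineqL hz0L
  -- ### extract conclusions at (x, t)
  have htmem : t ∈ Icc (0:ℝ) T' := ⟨ht.1.le, htT'.le⟩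
  have hU : 0 ≤ Real.exp (-(lam * t)) * (Real.exp (B * t) * QQ k g (x, t) - u x t) :=
    hUpper x t htmem
  have hL : 0 ≤ Real.exp (-(lam * t)) * (u x t - Real.exp (A * t) * QQ k g (x, t)) :=
    hLower x t htmem
  have hEpos := Real.exp_pos (-(lam * t))
  have h2 : 0 ≤ Real.exp (B * t) * QQ k g (x, t) - u x t := by
    by_contra hneg
    push_neg at hneg
    nlinarith [mul_pos hEpos (neg_pos.mpr hneg)]
  have h3 : 0 ≤ u x t - Real.exp (A * t) * QQ k g (x, t) := by
    by_contra hneg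
    push_neg at hneg
    nlinarith [mul_pos hEpos (neg_pos.mpr hneg)]
  have hQeq : QQ k g (x, t) = ∫ ξ : ℝ, heatKernel k (x - ξ) t * g ξ := QQ_eq hk ht.1 x
  have hQp := hQnn (x, t)
  refine ⟨?_, ?_, ?_⟩
  · rw [← hQeq]; linarith
  · rw [← hQeq]; linarith
  · have h4 : 0 ≤ Real.exp (A * t) * QQ k g (x, t) :=
      mul_nonneg (Real.exp_pos _).le hQp
    linarith
end

section
/- Let w > 0 and let f : (0,∞) → [0,∞) be measurable with f(t) ≤ C (1+t)^{−w} for all t > 0 and some constant C > 0. Then there exists a constant C' > 0 such that for all t ≥ 2 the ½-fractional integral (I_{1/2} f)(t) = ∫_0^t f(s) / √(t−s) ds satisfies (I_{1/2} f)(t) ≤ C' ( t^{−1/2} + (log t) · t^{−w + 1/2} ). -/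
open MeasureTheory Set


private lemma aux_int_one_add_rpow (w : ℝ) (hw : 0 < w) :
    ∃ B > 0, ∀ t : ℝ, 2 ≤ t →
      (∫ s in (0:ℝ)..(t/2), (1+s) ^ (-w)) ≤ B * (1 + Real.log t * t ^ (1 - w)) := by
  rcases le_or_gt w 1 with hw1 | hw1
  · refine ⟨1, one_pos, fun t ht => ?_⟩
    have ht0 : (0:ℝ) < t := by linarith
    have hT : (1:ℝ) ≤ t/2 := by linarith
    have hTt : 1 + t/2 ≤ t := by linarith
    have key : ∀ s ∈ Icc (0:ℝ) (t/2), (1+s) ^ (-w) ≤ t ^ (1-w) * (1+s)⁻¹ := by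
      intro s hs
      have hs0 : (0:ℝ) < 1 + s := by have := hs.1; linarith
      have h1 : (1+s) ^ (-w) = (1+s) ^ (1-w) * (1+s)⁻¹ := by
        rw [← Real.rpow_neg_one (1+s), ← Real.rpow_add hs0]; ring_nf
      rw [h1]
      have h2 : (1+s) ^ (1-w) ≤ t ^ (1-w) := by
        apply Real.rpow_le_rpow (le_of_lt hs0) _ (by linarith)
        have := hs.2; linarith
      exact mul_le_mul_of_nonneg_right h2 (by positivity)
    have hint1 : IntervalIntegrable (fun s => (1+s) ^ (-w)) volume 0 (t/2) := by
      apply ContinuousOn.intervalIntegrable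
      intro s hs
      have hs0 : (0:ℝ) < 1 + s := by
        rcases hs with ⟨h1, _⟩
        have : min (0:ℝ) (t/2) = 0 := min_eq_left (by linarith)
        rw [this] at h1; linarith
      exact ((Real.continuousAt_rpow_const _ _ (Or.inl (by linarith))).comp
        (by fun_prop)).continuousWithinAt
    have hint2 : IntervalIntegrable (fun s => t ^ (1-w) * (1+s)⁻¹) volume 0 (t/2) := by
      apply ContinuousOn.intervalIntegrable
      intro s hs
      have hs0 : (0:ℝ) < 1 + s := by
        rcases hs with ⟨h1, _⟩
        have : min (0:ℝ) (t/2) = 0 := min_eq_left (by linarith)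
        rw [this] at h1; linarith
      exact (ContinuousAt.mul continuousAt_const ((continuousAt_inv₀ (ne_of_gt hs0)).comp
        (by fun_prop))).continuousWithinAt
    have h3 : (∫ s in (0:ℝ)..(t/2), (1+s) ^ (-w)) ≤
        ∫ s in (0:ℝ)..(t/2), t ^ (1-w) * (1+s)⁻¹ := by
      apply intervalIntegral.integral_mono_on (by linarith) hint1 hint2 key
    have h4 : (∫ s in (0:ℝ)..(t/2), (1+s)⁻¹) = Real.log (1 + t/2) := by
      have := intervalIntegral.integral_comp_add_left (a := 0) (b := t/2) (fun x => x⁻¹) 1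
      simp only [add_zero] at this
      rw [this, integral_inv (Set.notMem_uIcc_of_lt one_pos (by linarith)), div_one]
    calc (∫ s in (0:ℝ)..(t/2), (1+s) ^ (-w))
        ≤ ∫ s in (0:ℝ)..(t/2), t ^ (1-w) * (1+s)⁻¹ := h3
      _ = t ^ (1-w) * Real.log (1 + t/2) := by
          rw [intervalIntegral.integral_const_mul, h4]
      _ ≤ t ^ (1-w) * Real.log t := by
          apply mul_le_mul_of_nonneg_left (Real.log_le_log (by linarith) hTt) (Real.rpow_nonneg ht0.le _)
      _ ≤ 1 * (1 + Real.log t * t ^ (1-w)) := by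
          have h5 : (0:ℝ) ≤ Real.log t * t ^ (1-w) :=
            mul_nonneg (Real.log_nonneg (by linarith)) (Real.rpow_nonneg ht0.le _)
          nlinarith [Real.log_nonneg (by linarith : (1:ℝ) ≤ t)]
  · refine ⟨1/(w-1), one_div_pos.mpr (by linarith), fun t ht => ?_⟩
    have ht0 : (0:ℝ) < t := by linarith
    have hT : (1:ℝ) ≤ t/2 := by linarith
    have h4 : (∫ s in (0:ℝ)..(t/2), (1+s) ^ (-w)) = ((1+t/2) ^ (1-w) - 1) / (1-w) := by
      have := intervalIntegral.integral_comp_add_left (a := 0) (b := t/2) (fun x => x ^ (-w)) 1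
      simp only [add_zero] at this
      rw [this, integral_rpow (Or.inr ⟨by intro h; have := neg_injective h; linarith,
        Set.notMem_uIcc_of_lt one_pos (by linarith)⟩)]
      rw [Real.one_rpow]
      ring_nf
    rw [h4]
    have h5 : ((1+t/2) ^ (1-w) - 1) / (1-w) ≤ 1/(w-1) := by
      rw [div_le_iff_of_neg (by linarith : 1 - w < 0)]
      have h6 : (0:ℝ) ≤ (1+t/2) ^ (1-w) := Real.rpow_nonneg (by linarith) _
      have : (1:ℝ)/(w-1) * (1-w) = -1 := by
        rw [div_mul_eq_mul_div, one_mul, div_eq_iff (by linarith : w-1 ≠ 0)]; ring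
      rw [this]; linarith
    have h7 : (0:ℝ) ≤ Real.log t * t ^ (1-w) :=
      mul_nonneg (Real.log_nonneg (by linarith)) (Real.rpow_nonneg ht0.le _)
    have h8 : (0:ℝ) < 1/(w-1) := by
      have : (0:ℝ) < w - 1 := by linarith
      positivity
    nlinarith


/-- Decay estimate for the ½-fractional integral of a function decaying
like `(1+t)^{-w}`: for `t ≥ 2`,
`∫_0^t f(s)/√(t-s) ds ≤ C' (t^{-1/2} + (log t) t^{-w+1/2})`. -/
theorem half_fractional_integral_decay
    (w : ℝ) (hw : 0 < w)
    (f : ℝ → ℝ) (hfmeas : Measurable f) (hfpos : ∀ t > (0 : ℝ), 0 ≤ f t)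
    (C : ℝ) (hC : 0 < C) (hdecay : ∀ t > (0 : ℝ), f t ≤ C * (1 + t) ^ (-w)) :
    ∃ C' > 0, ∀ t : ℝ, 2 ≤ t →
      (∫ s in Ioo (0 : ℝ) t, f s / Real.sqrt (t - s)) ≤
        C' * (t ^ (-(1 : ℝ) / 2) + Real.log t * t ^ (-w + 1 / 2)) := by
  obtain ⟨B, hB, hBint⟩ := aux_int_one_add_rpow w hw
  have hlog2 : (0:ℝ) < Real.log 2 := Real.log_pos (by norm_num)
  refine ⟨2*C*B + 2^(w+1)*C/Real.log 2, by positivity, fun t ht => ?_⟩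
  have ht0 : (0:ℝ) < t := by linarith
  have ht2 : (0:ℝ) < t/2 := by linarith
  have htt : t/2 < t := by linarith
  set g : ℝ → ℝ := fun s => C * (1+s) ^ (-w) * (t-s) ^ (-(1/2):ℝ) with hg
  -- integrability of the dominating function h s = C (t-s)^{-1/2} on 0..t
  have hI : ∀ c a b : ℝ, IntervalIntegrable (fun s => c * (t-s) ^ (-(1/2):ℝ)) volume a b := by
    intro c a b
    have := ((intervalIntegral.intervalIntegrable_rpow' (by norm_num : (-1:ℝ) < -(1/2))
      (a := t - a) (b := t - b)).comp_sub_left t).const_mul c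
    simpa using this
  -- pointwise: g ≤ C (t-s)^{-1/2} on (0,t)
  have hgle : ∀ s ∈ Icc (0:ℝ) t, g s ≤ C * (t-s) ^ (-(1/2):ℝ) := by
    intro s hs
    have h1 : (1+s:ℝ) ^ (-w) ≤ 1 :=
      Real.rpow_le_one_of_one_le_of_nonpos (by linarith [hs.1]) (by linarith)
    have h2 : (0:ℝ) ≤ (t-s) ^ (-(1/2):ℝ) := Real.rpow_nonneg (by linarith [hs.2]) _
    calc C * (1+s) ^ (-w) * (t-s) ^ (-(1/2):ℝ) ≤ C * 1 * (t-s) ^ (-(1/2):ℝ) := by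
          apply mul_le_mul_of_nonneg_right (mul_le_mul_of_nonneg_left h1 hC.le) h2
      _ = C * (t-s) ^ (-(1/2):ℝ) := by ring
  have hgnn : ∀ s ∈ Icc (0:ℝ) t, 0 ≤ g s := by
    intro s hs
    have := hs.1; have := hs.2
    have h1 : (0:ℝ) ≤ (1+s) ^ (-w) := Real.rpow_nonneg (by linarith) _
    have h2 : (0:ℝ) ≤ (t-s) ^ (-(1/2):ℝ) := Real.rpow_nonneg (by linarith) _
    positivity
  have hgmeas : Measurable g := by fun_prop
  -- g is integrable on Ioo 0 t
  have hgInt : IntegrableOn g (Ioo 0 t) := by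
    apply Integrable.mono' (((intervalIntegrable_iff_integrableOn_Ioc_of_le (by linarith)).mp
      (hI C 0 t)).mono_set Ioo_subset_Ioc_self) hgmeas.aestronglyMeasurable
    filter_upwards [ae_restrict_mem measurableSet_Ioo] with s hs
    rw [Real.norm_of_nonneg (hgnn s ⟨hs.1.le, hs.2.le⟩)]
    exact hgle s ⟨hs.1.le, hs.2.le⟩
  -- step 1 : compare with g
  have step1 : (∫ s in Ioo (0 : ℝ) t, f s / Real.sqrt (t - s)) ≤ ∫ s in Ioo (0:ℝ) t, g s := by
    apply integral_mono_of_nonneg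
    · filter_upwards [ae_restrict_mem measurableSet_Ioo] with s hs
      exact div_nonneg (hfpos s hs.1) (Real.sqrt_nonneg _)
    · exact hgInt
    · filter_upwards [ae_restrict_mem measurableSet_Ioo] with s hs
      have hts : (0:ℝ) < t - s := by linarith [hs.2]
      have hsq : (0:ℝ) < Real.sqrt (t-s) := Real.sqrt_pos.mpr hts
      have h1 : f s / Real.sqrt (t-s) ≤ (C * (1+s) ^ (-w)) / Real.sqrt (t-s) :=
        div_le_div_of_nonneg_right (hdecay s hs.1) hsq.le
      have h2 : (C * (1+s) ^ (-w)) / Real.sqrt (t-s) = g s := by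
        rw [Real.sqrt_eq_rpow, div_eq_mul_inv, ← Real.rpow_neg hts.le, hg]
      rw [h2] at h1; exact h1
  -- step 2 : Ioo integral = interval integral, then split at t/2
  have hgI1 : IntervalIntegrable g volume 0 (t/2) := by
    apply ContinuousOn.intervalIntegrable
    intro s hs
    rw [uIcc_of_le (by linarith)] at hs
    have h1 : (0:ℝ) < 1 + s := by linarith [hs.1]
    have h2 : (0:ℝ) < t - s := by linarith [hs.2]
    apply ContinuousWithinAt.mul
    · exact (ContinuousAt.mul continuousAt_const ((Real.continuousAt_rpow_const _ _
        (Or.inl h1.ne')).comp (by fun_prop))).continuousWithinAt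
    · exact ((Real.continuousAt_rpow_const _ _ (Or.inl h2.ne')).comp
        (by fun_prop)).continuousWithinAt
  have hgI2 : IntervalIntegrable g volume (t/2) t := by
    apply (hI C (t/2) t).mono_fun hgmeas.aestronglyMeasurable
    filter_upwards [ae_restrict_mem measurableSet_uIoc] with s hs
    rw [uIoc_of_le (by linarith : t/2 ≤ t)] at hs
    have hs' : s ∈ Icc (0:ℝ) t := ⟨by linarith [hs.1], hs.2⟩
    have hnn2 : (0:ℝ) ≤ C * (t-s) ^ (-(1/2):ℝ) :=
      mul_nonneg hC.le (Real.rpow_nonneg (by linarith [hs'.2]) _)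
    rw [Real.norm_of_nonneg (hgnn s hs'), Real.norm_of_nonneg hnn2]
    exact hgle s hs'
  have step2 : (∫ s in Ioo (0:ℝ) t, g s) =
      (∫ s in (0:ℝ)..(t/2), g s) + ∫ s in (t/2)..t, g s := by
    rw [intervalIntegral.integral_add_adjacent_intervals hgI1 hgI2,
      intervalIntegral.integral_of_le (by linarith : (0:ℝ) ≤ t),
      integral_Ioc_eq_integral_Ioo]
  -- piece 1
  have hint1 : IntervalIntegrable (fun s => (1+s:ℝ) ^ (-w)) volume 0 (t/2) := by
    apply ContinuousOn.intervalIntegrable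
    intro s hs
    rw [uIcc_of_le (by linarith)] at hs
    have h1 : (0:ℝ) < 1 + s := by linarith [hs.1]
    exact ((Real.continuousAt_rpow_const _ _ (Or.inl h1.ne')).comp
      (by fun_prop)).continuousWithinAt
  have piece1 : (∫ s in (0:ℝ)..(t/2), g s) ≤
      C * (t/2) ^ (-(1/2):ℝ) * (B * (1 + Real.log t * t ^ (1-w))) := by
    have hmono : (∫ s in (0:ℝ)..(t/2), g s) ≤
        ∫ s in (0:ℝ)..(t/2), (C * (t/2) ^ (-(1/2):ℝ)) * (1+s) ^ (-w) := by
      apply intervalIntegral.integral_mono_on (by linarith) hgI1 (hint1.const_mul _)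
      intro s hs
      have h1 : (t-s:ℝ) ^ (-(1/2):ℝ) ≤ (t/2) ^ (-(1/2):ℝ) :=
        Real.rpow_le_rpow_of_nonpos ht2 (by linarith [hs.2]) (by norm_num)
      have h2 : (0:ℝ) ≤ C * (1+s) ^ (-w) :=
        mul_nonneg hC.le (Real.rpow_nonneg (by linarith [hs.1]) _)
      calc C * (1+s) ^ (-w) * (t-s) ^ (-(1/2):ℝ) ≤ C * (1+s) ^ (-w) * (t/2) ^ (-(1/2):ℝ) :=
            mul_le_mul_of_nonneg_left h1 h2
        _ = (C * (t/2) ^ (-(1/2):ℝ)) * (1+s) ^ (-w) := by ring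
    rw [intervalIntegral.integral_const_mul] at hmono
    calc (∫ s in (0:ℝ)..(t/2), g s)
        ≤ (C * (t/2) ^ (-(1/2):ℝ)) * ∫ s in (0:ℝ)..(t/2), (1+s) ^ (-w) := hmono
      _ ≤ C * (t/2) ^ (-(1/2):ℝ) * (B * (1 + Real.log t * t ^ (1-w))) := by
          apply mul_le_mul_of_nonneg_left (hBint t ht)
          exact mul_nonneg hC.le (Real.rpow_nonneg ht2.le _)
  -- piece 2
  have hval2 : (∫ s in (t/2)..t, (t-s) ^ (-(1/2):ℝ)) = 2 * (t/2) ^ ((1/2):ℝ) := by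
    have := intervalIntegral.integral_comp_sub_left (a := t/2) (b := t)
      (fun x => x ^ (-(1/2):ℝ)) t
    rw [this, sub_self, integral_rpow (Or.inl (by norm_num)),
      Real.zero_rpow (by norm_num)]
    norm_num
    rw [show t - t/2 = t/2 by ring]
    ring
  have piece2 : (∫ s in (t/2)..t, g s) ≤ C * (t/2) ^ (-w) * (2 * (t/2) ^ ((1/2):ℝ)) := by
    have hmono : (∫ s in (t/2)..t, g s) ≤
        ∫ s in (t/2)..t, (C * (t/2) ^ (-w)) * (t-s) ^ (-(1/2):ℝ) := by
      apply intervalIntegral.integral_mono_on (by linarith) hgI2 ?_ ?_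
      · exact hI _ (t/2) t
      · intro s hs
        have h1 : (1+s:ℝ) ^ (-w) ≤ (t/2) ^ (-w) :=
          Real.rpow_le_rpow_of_nonpos ht2 (by linarith [hs.1]) (by linarith)
        have h2 : (0:ℝ) ≤ (t-s) ^ (-(1/2):ℝ) := Real.rpow_nonneg (by linarith [hs.2]) _
        calc C * (1+s) ^ (-w) * (t-s) ^ (-(1/2):ℝ)
            ≤ C * (t/2) ^ (-w) * (t-s) ^ (-(1/2):ℝ) := by
              apply mul_le_mul_of_nonneg_right (mul_le_mul_of_nonneg_left h1 hC.le) h2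
          _ = (C * (t/2) ^ (-w)) * (t-s) ^ (-(1/2):ℝ) := by ring
    rw [intervalIntegral.integral_const_mul, hval2] at hmono
    exact hmono
  -- assemble
  set X : ℝ := t ^ (-(1/2):ℝ) with hX
  set L : ℝ := Real.log t * t ^ (-w + 1/2) with hL
  have hXnn : 0 ≤ X := Real.rpow_nonneg ht0.le _
  have hlogt : Real.log 2 ≤ Real.log t := Real.log_le_log (by norm_num) (by linarith)
  have hLnn : 0 ≤ L := mul_nonneg (by linarith) (Real.rpow_nonneg ht0.le _)
  have hXL : X * t ^ (1-w) = t ^ (-w + 1/2) := by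
    rw [hX, ← Real.rpow_add ht0]; ring_nf
  have ha : (t/2) ^ (-(1/2):ℝ) ≤ 2 * X := by
    rw [Real.div_rpow ht0.le (by norm_num), div_eq_mul_inv,
      ← Real.rpow_neg (by norm_num : (0:ℝ) ≤ 2), neg_neg]
    have h2 : (2:ℝ) ^ ((1/2):ℝ) ≤ 2 := by
      calc (2:ℝ) ^ ((1/2):ℝ) ≤ (2:ℝ) ^ (1:ℝ) :=
            Real.rpow_le_rpow_of_exponent_le (by norm_num) (by norm_num)
        _ = 2 := Real.rpow_one 2
    calc X * (2:ℝ) ^ ((1/2):ℝ) ≤ X * 2 := mul_le_mul_of_nonneg_left h2 hXnn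
      _ = 2 * X := by ring
  have e1 : (∫ s in (0:ℝ)..(t/2), g s) ≤ 2*C*B * (X + L) := by
    calc (∫ s in (0:ℝ)..(t/2), g s)
        ≤ C * (t/2) ^ (-(1/2):ℝ) * (B * (1 + Real.log t * t ^ (1-w))) := piece1
      _ ≤ C * (2 * X) * (B * (1 + Real.log t * t ^ (1-w))) := by
          apply mul_le_mul_of_nonneg_right (mul_le_mul_of_nonneg_left ha hC.le)
          have h3 : (0:ℝ) ≤ Real.log t * t ^ (1-w) :=
            mul_nonneg (by linarith) (Real.rpow_nonneg ht0.le _)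
          positivity
      _ = 2*C*B * (X + Real.log t * (X * t ^ (1-w))) := by ring
      _ = 2*C*B * (X + L) := by rw [hXL, hL]
  have e2 : (∫ s in (t/2)..t, g s) ≤ (2^(w+1)*C/Real.log 2) * L := by
    have hb : (t/2) ^ (-w) * (t/2) ^ ((1/2):ℝ) = (t/2) ^ (-w + 1/2) := by
      rw [← Real.rpow_add ht2]
    have hc : (t/2) ^ ((-w + 1/2):ℝ) ≤ 2^w * t ^ (-w + 1/2) := by
      rw [Real.div_rpow ht0.le (by norm_num), div_eq_mul_inv,
        ← Real.rpow_neg (by norm_num : (0:ℝ) ≤ 2)]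
      have h2 : (2:ℝ) ^ (-(-w + 1/2)) ≤ 2 ^ w := by
        apply Real.rpow_le_rpow_of_exponent_le (by norm_num); linarith
      calc t ^ (-w + 1/2) * (2:ℝ) ^ (-(-w + 1/2))
          ≤ t ^ (-w + 1/2) * 2 ^ w :=
            mul_le_mul_of_nonneg_left h2 (Real.rpow_nonneg ht0.le _)
        _ = 2^w * t ^ (-w + 1/2) := by ring
    have hd : (2:ℝ)^w * 2 = 2^(w+1) := by
      rw [Real.rpow_add (by norm_num : (0:ℝ) < 2), Real.rpow_one]
    have h2w : (0:ℝ) < (2:ℝ)^w := Real.rpow_pos_of_pos (by norm_num) w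
    calc (∫ s in (t/2)..t, g s)
        ≤ C * (t/2) ^ (-w) * (2 * (t/2) ^ ((1/2):ℝ)) := piece2
      _ = 2 * C * ((t/2) ^ (-w) * (t/2) ^ ((1/2):ℝ)) := by ring
      _ = 2 * C * (t/2) ^ (-w + 1/2) := by rw [hb]
      _ ≤ 2 * C * (2^w * t ^ (-w + 1/2)) := by
          apply mul_le_mul_of_nonneg_left hc (by positivity)
      _ = (2^(w+1)*C) * t ^ (-w + 1/2) := by rw [← hd]; ring
      _ = (2^(w+1)*C/Real.log 2) * (Real.log 2 * t ^ (-w + 1/2)) := by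
          field_simp
      _ ≤ (2^(w+1)*C/Real.log 2) * (Real.log t * t ^ (-w + 1/2)) := by
          apply mul_le_mul_of_nonneg_left _ (by positivity)
          exact mul_le_mul_of_nonneg_right hlogt (Real.rpow_nonneg ht0.le _)
      _ = (2^(w+1)*C/Real.log 2) * L := by rw [hL]
  have hXeq : t ^ (-(1:ℝ)/2) = X := by rw [hX]; norm_num
  have hK2 : (0:ℝ) ≤ 2^(w+1)*C/Real.log 2 := by positivity
  calc (∫ s in Ioo (0 : ℝ) t, f s / Real.sqrt (t - s))
      ≤ ∫ s in Ioo (0:ℝ) t, g s := step1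
    _ = (∫ s in (0:ℝ)..(t/2), g s) + ∫ s in (t/2)..t, g s := step2
    _ ≤ 2*C*B * (X + L) + (2^(w+1)*C/Real.log 2) * L := add_le_add e1 e2
    _ ≤ (2*C*B + 2^(w+1)*C/Real.log 2) * (X + L) := by nlinarith
    _ = (2*C*B + 2^(w+1)*C/Real.log 2) * (t ^ (-(1:ℝ)/2) + Real.log t * t ^ (-w + 1/2)) := by
        rw [hXeq, hL]
end

section
/- Let k > 0 and let b_l, b_r : [0,∞) → ℝ be differentiable. Suppose F : ℝ × (0,∞) → ℝ possesses the partial derivatives F_t, F_x, F_{xx} and satisfies F_t = k F_{xx} + ḃ_l(t) F^+ − ḃ_r(t) F^− on ℝ × (0,∞), where F^+ = (F + |F|)/2 and F^− = (|F| − F)/2. Then the function U(x,t) := F(x,t) · exp( −(b_l(t) + b_r(t))/2 ) satisfies U_t = k U_{xx} + ½ ( ḃ_l(t) − ḃ_r(t) ) |U| on ℝ × (0,∞). -/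
open Set

/-- The exponential change of unknown
`U(x,t) = F(x,t) exp(-(b_l(t)+b_r(t))/2)` transforms the equation
`F_t = k F_{xx} + ḃ_l F^+ - ḃ_r F^-` (with `F^+ = (F+|F|)/2`, `F^- = (|F|-F)/2`)
into the semilinear heat equation `U_t = k U_{xx} + ½(ḃ_l - ḃ_r)|U|`. -/
theorem exponential_transformation
    (k : ℝ) (hk : 0 < k)
    (bl br bl' br' : ℝ → ℝ)
    (hbl : ∀ t : ℝ, HasDerivAt bl (bl' t) t)
    (hbr : ∀ t : ℝ, HasDerivAt br (br' t) t)
    (F Fx Fxx Ft : ℝ → ℝ → ℝ)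
    (hFx : ∀ x : ℝ, ∀ t > (0 : ℝ), HasDerivAt (fun y => F y t) (Fx x t) x)
    (hFxx : ∀ x : ℝ, ∀ t > (0 : ℝ), HasDerivAt (fun y => Fx y t) (Fxx x t) x)
    (hFt : ∀ x : ℝ, ∀ t > (0 : ℝ), HasDerivAt (fun s => F x s) (Ft x t) t)
    (hPDE : ∀ x : ℝ, ∀ t > (0 : ℝ),
      Ft x t = k * Fxx x t + bl' t * ((F x t + |F x t|) / 2)
        - br' t * ((|F x t| - F x t) / 2)) :
    ∀ x : ℝ, ∀ t > (0 : ℝ),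
      -- spatial derivatives of U(·,t)
      HasDerivAt (fun y => F y t * Real.exp (-(bl t + br t) / 2))
        (Fx x t * Real.exp (-(bl t + br t) / 2)) x ∧
      HasDerivAt (fun y => Fx y t * Real.exp (-(bl t + br t) / 2))
        (Fxx x t * Real.exp (-(bl t + br t) / 2)) x ∧
      -- time derivative of U(x,·) : U_t = k U_{xx} + ½(ḃ_l - ḃ_r)|U|
      HasDerivAt (fun s => F x s * Real.exp (-(bl s + br s) / 2))
        (k * (Fxx x t * Real.exp (-(bl t + br t) / 2))
          + (1 / 2) * (bl' t - br' t) * |F x t * Real.exp (-(bl t + br t) / 2)|) t := by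
  intro x t ht
  refine ⟨(hFx x t ht).mul_const _, (hFxx x t ht).mul_const _, ?_⟩
  have hg : HasDerivAt (fun s => -(bl s + br s) / 2) (-(bl' t + br' t) / 2) t :=
    (((hbl t).add (hbr t)).neg).div_const 2
  have he : HasDerivAt (fun s => Real.exp (-(bl s + br s) / 2))
      (Real.exp (-(bl t + br t) / 2) * (-(bl' t + br' t) / 2)) t := hg.exp
  have h := (hFt x t ht).mul he
  refine h.congr_deriv ?_
  rw [abs_mul, abs_of_pos (Real.exp_pos _), hPDE x t ht]
  ring
end
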